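/- arXiv:2411.16376 — 7 statements merged into one kernel-verified Lean document; each statement's English description precedes it below -/
import Mathlib

section
/- For all α, λ, x in (0,∞), the inversion formula (1/Γ(1+α)) e^{-λx} x^α = (1/(2π)) ∫_{-∞}^{+∞} e^{iθx} (λ + iθ)^{-(1+α)} dθ holds, where the complex power takes the principal value. -/
open MeasureTheory Complex Real

open Set Filter FourierTransform in

lemma laplace_integrable {a s : ℂ} (ha : 0 < a.re) (hs : 0 < s.re) :
    IntegrableOn (fun t : ℝ => (t:ℂ) ^ (a-1) * Complex.exp (-(s * t))) (Ioi 0) := by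
  have h := integrableOn_rpow_mul_exp_neg_mul_rpow (p := 1) (s := a.re - 1) (b := s.re)
    (by linarith) zero_lt_one hs
  simp only [Real.rpow_one] at h
  have hmeas : AEStronglyMeasurable (fun t : ℝ => (t:ℂ) ^ (a-1) * Complex.exp (-(s * t)))
      (volume.restrict (Ioi 0)) := by
    apply ContinuousOn.aestronglyMeasurable ?_ measurableSet_Ioi
    apply ContinuousOn.mul
    · intro t ht
      exact ((continuousAt_cpow_const (ofReal_mem_slitPlane.2 ht)).comp
        Complex.continuous_ofReal.continuousAt).continuousWithinAt
    · exact (Complex.continuous_exp.comp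
        ((continuous_const.mul Complex.continuous_ofReal).neg)).continuousOn
  refine h.mono' hmeas ?_
  filter_upwards [ae_restrict_mem measurableSet_Ioi] with t ht
  rw [norm_mul, Complex.norm_cpow_eq_rpow_re_of_pos ht, Complex.norm_exp]
  simp only [sub_re, one_re, neg_re, mul_re, ofReal_re, ofReal_im, mul_zero, sub_zero]
  exact le_of_eq (by ring_nf)

open Set Filter FourierTransform in
lemma laplace_diff {a : ℂ} (ha : 0 < a.re) {s₀ : ℂ} (hs₀ : 0 < s₀.re) :
    HasDerivAt (fun s => ∫ t in Ioi (0:ℝ), (t:ℂ) ^ (a-1) * Complex.exp (-(s * t)))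
      (∫ t in Ioi (0:ℝ), (t:ℂ) ^ (a-1) * (-(t:ℂ)) * Complex.exp (-(s₀ * t))) s₀ := by
  set ε := s₀.re / 2 with hε
  have hεpos : 0 < ε := by positivity
  have hball : ∀ s ∈ Metric.ball s₀ ε, ε < s.re := by
    intro s hsb
    rw [Metric.mem_ball, Complex.dist_eq] at hsb
    have h1 : |(s - s₀).re| ≤ ‖s - s₀‖ := Complex.abs_re_le_norm _
    rw [Complex.sub_re] at h1
    have := abs_lt.1 (lt_of_le_of_lt h1 hsb)
    simp only [hε] at *; linarith [this.1]
  have key := hasDerivAt_integral_of_dominated_loc_of_deriv_le (μ := volume.restrict (Ioi 0))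
    (F := fun (s : ℂ) (t : ℝ) => (t:ℂ) ^ (a-1) * Complex.exp (-(s * t)))
    (F' := fun (s : ℂ) (t : ℝ) => (t:ℂ) ^ (a-1) * (-(t:ℂ)) * Complex.exp (-(s * t)))
    (bound := fun t : ℝ => t ^ a.re * Real.exp (-ε * t)) (x₀ := s₀) (Metric.ball_mem_nhds s₀ hεpos)
    ?_ ?_ ?_ ?_ ?_ ?_
  · exact key.2
  · have hopen : ∀ᶠ s : ℂ in nhds s₀, 0 < s.re :=
      (isOpen_lt continuous_const Complex.continuous_re).eventually_mem hs₀
    filter_upwards [hopen] with s hs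
    exact (laplace_integrable ha hs).aestronglyMeasurable
  · exact laplace_integrable ha hs₀
  · apply ContinuousOn.aestronglyMeasurable ?_ measurableSet_Ioi
    apply ContinuousOn.mul ?_ (Complex.continuous_exp.comp
        ((continuous_const.mul Complex.continuous_ofReal).neg)).continuousOn
    apply ContinuousOn.mul ?_ (continuous_ofReal.neg.continuousOn)
    intro t ht
    exact ((continuousAt_cpow_const (ofReal_mem_slitPlane.2 ht)).comp
      Complex.continuous_ofReal.continuousAt).continuousWithinAt
  · filter_upwards [ae_restrict_mem measurableSet_Ioi] with t ht s hsb
    have ht : (0:ℝ) < t := ht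
    rw [norm_mul, norm_mul, Complex.norm_cpow_eq_rpow_re_of_pos ht, Complex.norm_exp]
    simp only [sub_re, one_re, neg_re, mul_re, ofReal_re, ofReal_im, mul_zero, sub_zero,
      norm_neg, Complex.norm_real, Real.norm_eq_abs, abs_of_pos ht]
    have h1 : t ^ (a.re - 1) * t = t ^ a.re := by
      rw [← Real.rpow_add_one (ne_of_gt ht), sub_add_cancel]
    calc t ^ (a.re - 1) * t * Real.exp (-(s.re * t))
        ≤ t ^ (a.re - 1) * t * Real.exp (-ε * t) := by
          gcongr
          · nlinarith [(hball s hsb), ht.le, le_of_lt ht]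
      _ = t ^ a.re * Real.exp (-ε * t) := by rw [h1]
  · have h := integrableOn_rpow_mul_exp_neg_mul_rpow (p := 1) (s := a.re) (b := ε)
      (by linarith) zero_lt_one hεpos
    simpa only [Real.rpow_one, IntegrableOn] using h
  · filter_upwards [ae_restrict_mem measurableSet_Ioi] with t ht s hsb
    have hd : HasDerivAt (fun s : ℂ => Complex.exp (-(s * t)))
        (Complex.exp (-(s * t)) * (-(t:ℂ))) s := by
      exact ((hasDerivAt_mul_const (t:ℂ)).neg).cexp
    have := hd.const_mul ((t:ℂ) ^ (a-1))
    refine this.congr_deriv ?_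
    ring

open Set Filter FourierTransform in
lemma laplace_eq {a : ℂ} (ha : 0 < a.re) {s : ℂ} (hs : 0 < s.re) :
    ∫ t in Ioi (0:ℝ), (t:ℂ) ^ (a-1) * Complex.exp (-(s * t))
      = Complex.Gamma a * s ^ (-a) := by
  set F : ℂ → ℂ := fun s => ∫ t in Ioi (0:ℝ), (t:ℂ) ^ (a-1) * Complex.exp (-(s * t)) with hFdef
  set G : ℂ → ℂ := fun s => Complex.Gamma a * s ^ (-a) with hGdef
  set U : Set ℂ := {z | 0 < z.re} with hUdef
  have hUo : IsOpen U := isOpen_lt continuous_const Complex.continuous_re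
  have hUc : IsPreconnected U := (convex_halfSpace_re_gt 0).isPreconnected
  have hFd : DifferentiableOn ℂ F U :=
    fun z hz => (laplace_diff ha hz).differentiableAt.differentiableWithinAt
  have hGd : DifferentiableOn ℂ G U := by
    intro z hz
    exact ((((hasDerivAt_id z).cpow_const (Or.inl (by exact hz))).differentiableAt.const_mul
      _)).differentiableWithinAt
  have hF : AnalyticOnNhd ℂ F U := hFd.analyticOnNhd hUo
  have hG : AnalyticOnNhd ℂ G U := hGd.analyticOnNhd hUo
  have heq : ∀ r : ℝ, 0 < r → F r = G r := by
    intro r hr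
    have h := integral_cpow_mul_exp_neg_mul_Ioi ha hr
    rw [hFdef, hGdef]
    simp only
    rw [h, mul_comm]
    congr 1
    rw [cpow_neg, one_div, inv_cpow]
    rw [Complex.arg_ofReal_of_nonneg hr.le]
    exact Real.pi_ne_zero.symm
  have hfreq : ∃ᶠ z in nhdsWithin (2:ℂ) {(2:ℂ)}ᶜ, F z = G z := by
    have htend : Tendsto (fun r : ℝ => (r:ℂ)) (nhdsWithin 2 (Ioi 2))
        (nhdsWithin (2:ℂ) {(2:ℂ)}ᶜ) := by
      apply tendsto_nhdsWithin_of_tendsto_nhds_of_eventually_within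
      · exact ((continuous_ofReal.tendsto 2).mono_left nhdsWithin_le_nhds)
      · filter_upwards [eventually_mem_nhdsWithin] with r hr
        simp only [mem_compl_iff, mem_singleton_iff]
        exact_mod_cast ne_of_gt (mem_Ioi.1 hr)
    apply htend.frequently
    apply Eventually.frequently
    filter_upwards [eventually_mem_nhdsWithin] with r hr
    exact heq r (lt_trans two_pos (mem_Ioi.1 hr))
  have := hF.eqOn_of_preconnected_of_frequently_eq hG hUc (show (0:ℝ) < (2:ℂ).re by norm_num) hfreq
  exact this hs

open Set Filter FourierTransform in
/-- Fourier inversion formula for the gamma density: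
`(1/Γ(1+α)) e^{-λx} x^α = (1/(2π)) ∫_ℝ e^{iθx} (λ+iθ)^{-(1+α)} dθ` (principal powers). -/
theorem gamma_fourier_inversion (α lam x : ℝ) (hα : 0 < α) (hlam : 0 < lam) (hx : 0 < x) :
    ((1 / Real.Gamma (1 + α) * Real.exp (-lam * x) * x ^ α : ℝ) : ℂ)
      = (1 / (2 * Real.pi)) *
        ∫ θ : ℝ, Complex.exp ((θ : ℂ) * x * Complex.I) *
          ((lam : ℂ) + θ * Complex.I) ^ (-(1 + α) : ℂ) := by
  set a : ℂ := 1 + (α : ℂ) with ha_def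
  have ha : 0 < a.re := by simp [ha_def]; linarith
  have haim : a.im = 0 := by simp [ha_def]
  set f : ℝ → ℂ :=
    (Ioi (0:ℝ)).indicator (fun t : ℝ => (t:ℂ) ^ (a-1) * Complex.exp (-((lam:ℂ) * t))) with hf_def
  have hlamre : (0:ℝ) < ((lam:ℂ)).re := by simpa using hlam
  have hf_int : Integrable f :=
    (integrable_indicator_iff measurableSet_Ioi).2 (laplace_integrable ha hlamre)
  have hf_cont : ContinuousAt f x := by
    have hev : f =ᶠ[nhds x] (fun t : ℝ => (t:ℂ) ^ (a-1) * Complex.exp (-((lam:ℂ) * t))) := by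
      filter_upwards [Ioi_mem_nhds hx] with t ht
      exact Set.indicator_of_mem ht _
    have hc : ContinuousAt (fun t : ℝ => (t:ℂ) ^ (a-1) * Complex.exp (-((lam:ℂ) * t))) x :=
      (((continuousAt_cpow_const (ofReal_mem_slitPlane.2 hx)).comp
      Complex.continuous_ofReal.continuousAt)).mul
      ((Complex.continuous_exp.comp
        ((continuous_const.mul Complex.continuous_ofReal).neg)).continuousAt)
    exact hc.congr hev.symm
  have hsre : ∀ ξ : ℝ, (0:ℝ) < ((lam:ℂ) + (2*π*ξ:ℝ) * I).re := by
    intro ξ; simp [hlam]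
  have hFf : 𝓕 f = fun ξ : ℝ => Complex.Gamma a * ((lam:ℂ) + (2*π*ξ:ℝ) * I) ^ (-a) := by
    funext ξ
    rw [Real.fourier_real_eq_integral_exp_smul]
    have hpt : ∀ v : ℝ, Complex.exp (((-2*π*v*ξ:ℝ):ℂ) * I) • f v
        = (Ioi (0:ℝ)).indicator
            (fun v : ℝ => (v:ℂ) ^ (a-1)
              * Complex.exp (-(((lam:ℂ) + (2*π*ξ:ℝ) * I) * v))) v := by
      intro v
      by_cases hv : v ∈ Ioi (0:ℝ)
      · rw [hf_def]
        simp only [Set.indicator_of_mem hv, smul_eq_mul]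
        rw [mul_left_comm, ← Complex.exp_add]
        congr 2
        push_cast
        ring
      · rw [hf_def]; simp [Set.indicator_of_notMem hv]
    simp_rw [hpt]
    rw [integral_indicator measurableSet_Ioi]
    exact laplace_eq ha (hsre ξ)
  have hFf_int : Integrable (𝓕 f) := by
    rw [hFf]
    set m : ℝ := min lam (2*π) with hm_def
    have hm : 0 < m := lt_min hlam (by positivity)
    have hint : Integrable (fun ξ : ℝ =>
        ‖Complex.Gamma a‖ * (m/2) ^ (-(1+α)) * (1 + ‖ξ‖) ^ (-(1+α))) := by
      exact (integrable_one_add_norm (E := ℝ) (by simp; linarith)).const_mul _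
    refine hint.mono' ?_ ?_
    · apply Continuous.aestronglyMeasurable
      apply continuous_const.mul
      rw [continuous_iff_continuousAt]
      intro ξ
      exact ContinuousAt.cpow
        ((by fun_prop : Continuous fun ξ : ℝ => (lam:ℂ) + (2*π*ξ:ℝ) * I).continuousAt)
        continuousAt_const (Or.inl (hsre ξ))
    · filter_upwards with ξ
      set z : ℂ := (lam:ℂ) + (2*π*ξ:ℝ) * I with hz_def
      have hzre : z.re = lam := by simp [hz_def]
      have hzim : z.im = 2*π*ξ := by simp [hz_def]
      have hz0 : z ≠ 0 := by
        intro h; rw [h] at hzre; simp at hzre; exact hlam.ne hzre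
      have hzabs : (m/2) * (1 + ‖ξ‖) ≤ ‖z‖ := by
        have h1 : lam ≤ ‖z‖ := hzre ▸ (Complex.abs_re_le_norm z).trans_eq' (abs_of_pos (hzre ▸ hlam))
        have h2 : 2*π*‖ξ‖ ≤ ‖z‖ := by
          have := Complex.abs_im_le_norm z
          rw [hzim, abs_mul] at this
          calc 2*π*‖ξ‖ = |2*π| * |ξ| := by rw [abs_of_pos (by positivity), Real.norm_eq_abs]
            _ ≤ _ := this
        have hmlam : m ≤ lam := min_le_left _ _
        have hm2 : m ≤ 2*π := min_le_right _ _
        have hξ : 0 ≤ ‖ξ‖ := norm_nonneg ξ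
        nlinarith
      rw [norm_mul, Complex.norm_cpow_of_ne_zero hz0]
      have hre : (-a).re = -(1+α) := by simp [ha_def]
      have him : (-a).im = 0 := by simp [haim]
      rw [hre, him, mul_zero, Real.exp_zero, div_one]
      rw [mul_assoc]
      apply mul_le_mul_of_nonneg_left ?_ (norm_nonneg _)
      have hpos : (0:ℝ) < (m/2) * (1 + ‖ξ‖) := by positivity
      calc ‖z‖ ^ (-(1+α)) ≤ ((m/2) * (1 + ‖ξ‖)) ^ (-(1+α)) := by
            apply Real.rpow_le_rpow_of_nonpos hpos hzabs (by linarith)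
        _ = (m/2) ^ (-(1+α)) * (1 + ‖ξ‖) ^ (-(1+α)) := by
            rw [Real.mul_rpow (by positivity) (by positivity)]
  have hinv := hf_int.fourierInv_fourier_eq hFf_int hf_cont
  rw [hFf] at hinv
  rw [Real.fourierInv_eq'] at hinv
  simp only [RCLike.inner_apply, starRingEnd_apply, star_trivial, smul_eq_mul] at hinv
  set g : ℝ → ℂ := fun θ => Complex.exp ((θ:ℂ) * x * I) * ((lam:ℂ) + θ * I) ^ (-a) with hg_def
  have hcomp : (∫ ξ : ℝ, Complex.exp (((2 * π * (x * ξ) : ℝ):ℂ) * I) *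
      (Complex.Gamma a * ((lam:ℂ) + (2*π*ξ:ℝ) * I) ^ (-a)))
      = Complex.Gamma a * ∫ ξ : ℝ, g (2*π*ξ) := by
    rw [← integral_const_mul]
    congr 1
    funext ξ
    rw [hg_def]
    push_cast
    ring
  rw [hcomp] at hinv
  have hchg : (∫ ξ : ℝ, g (2*π*ξ)) = |(2*π)⁻¹| • ∫ θ : ℝ, g θ :=
    MeasureTheory.Measure.integral_comp_mul_left g (2*π)
  rw [hchg] at hinv
  have hfx : f x = (x:ℂ) ^ (a-1) * Complex.exp (-((lam:ℂ) * x)) :=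
    Set.indicator_of_mem hx _
  rw [hfx] at hinv
  have hGam : Complex.Gamma a = ((Real.Gamma (1+α) : ℝ) : ℂ) := by
    rw [ha_def, show (1 + (α:ℂ)) = ((1+α : ℝ):ℂ) by push_cast; ring, Complex.Gamma_ofReal]
  have hGamne : Complex.Gamma a ≠ 0 := by
    rw [hGam]
    exact_mod_cast (Real.Gamma_pos_of_pos (by linarith)).ne'
  have habs : |(2*π)⁻¹| = (1/(2*π) : ℝ) := by
    rw [abs_of_pos (by positivity), one_div]
  rw [habs] at hinv
  -- hinv : Γ a * ((1/(2π)) • ∫ g) = x^(a-1) * exp(-(λ x))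
  have hE : (1 / (2 * (π:ℂ))) * (∫ θ : ℝ, g θ)
      = (x:ℂ) ^ (a-1) * Complex.exp (-((lam:ℂ) * x)) / Complex.Gamma a := by
    rw [← hinv, real_smul]
    push_cast
    rw [mul_div_cancel_left₀ _ hGamne]
  show _ = (1 / (2 * (π:ℂ))) * ∫ θ : ℝ, g θ
  rw [hE, hGam]
  rw [show ((a:ℂ) - 1) = ((α:ℝ):ℂ) from by rw [ha_def]; ring, ← Complex.ofReal_cpow hx.le]
  rw [show -((lam:ℂ) * x) = ((-(lam * x) : ℝ) : ℂ) from by push_cast; ring,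
    ← Complex.ofReal_exp]
  push_cast
  rw [neg_mul]
  ring
end

section
/- Let 0 < α < β ≤ 1 and C₁, C₂ ∈ (0,∞), and let Φ(z) = C₁ z^α + C₂ z^β. For every fixed N ∈ ℕ and r > 0 there is a constant C > 0 such that for all z ∈ ℂ with Re z > 0 and |Im z| > r, the N-th derivative satisfies |(d/dz)^N (1/Φ(z))| ≤ C |z|^{-N-β}. Consequently, sup_{λ>0} ∫_{ℝ\(-r,r)} |((d/dz)^N (1/Φ))(λ + iθ)| dθ < ∞. -/
open Complex MeasureTheory
open scoped ENNReal NNReal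

open Metric
open scoped Real

/-- Cauchy estimate: if `f` is differentiable on a closed ball and bounded by `Cb` on the
boundary sphere, then the `n`-th derivative at the center is at most `n! * Cb / R^n`. -/
lemma cauchy_deriv_bound {f : ℂ → ℂ} {z : ℂ} {R : ℝ} (hR : 0 < R)
    (hf : DifferentiableOn ℂ f (closedBall z R)) {Cb : ℝ}
    (hCb : ∀ w ∈ sphere z R, ‖f w‖ ≤ Cb) (n : ℕ) :
    ‖iteratedDeriv n f z‖ ≤ (n.factorial : ℝ) * Cb / R ^ n := by
  lift R to ℝ≥0 using hR.le
  have hR' : 0 < R := by exact_mod_cast hR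
  have h := hf.hasFPowerSeriesOnBall hR'
  have h1 := h.factorial_smul (1 : ℂ) n
  have hCb0 : 0 ≤ Cb := le_trans (norm_nonneg _) (hCb (z + R) (by simp [_root_.abs_of_nonneg hR.le]))
  have hid : iteratedDeriv n f z = iteratedFDeriv ℂ n f z (fun _ => 1) := rfl
  have h2 : ‖iteratedDeriv n f z‖ = (n.factorial : ℝ) * ‖cauchyPowerSeries f z R n (fun _ => (1:ℂ))‖ := by
    rw [hid, ← h1, ← Nat.cast_smul_eq_nsmul ℝ, norm_smul]
    simp
  rw [h2]
  have h3 : ‖cauchyPowerSeries f z R n (fun _ => (1:ℂ))‖ ≤ ‖cauchyPowerSeries f z (R:ℝ) n‖ := by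
    simpa using (cauchyPowerSeries f z (R:ℝ) n).le_opNorm (fun _ => (1:ℂ))
  have hcont : ContinuousOn (fun θ : ℝ => ‖f (circleMap z R θ)‖) Set.univ := by
    refine (hf.continuousOn.comp ((continuous_circleMap z R).continuousOn) ?_).norm
    intro θ _
    exact sphere_subset_closedBall (circleMap_mem_sphere z hR.le θ)
  have hint : IntervalIntegrable (fun θ : ℝ => ‖f (circleMap z R θ)‖) volume 0 (2*π) :=
    (hcont.mono (Set.subset_univ _)).intervalIntegrable
  have h5 : (∫ θ : ℝ in (0)..2 * π, ‖f (circleMap z R θ)‖) ≤ 2 * π * Cb := by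
    calc (∫ θ : ℝ in (0)..2 * π, ‖f (circleMap z R θ)‖)
        ≤ ∫ _ : ℝ in (0)..2 * π, Cb := by
          refine intervalIntegral.integral_mono_on Real.two_pi_pos.le hint
            intervalIntegrable_const ?_
          intro θ _
          exact hCb _ (circleMap_mem_sphere z hR.le θ)
      _ = 2 * π * Cb := by simp
  have h4 := norm_cauchyPowerSeries_le f z (R:ℝ) n
  have h6 : ‖cauchyPowerSeries f z (R:ℝ) n‖ ≤ Cb * ((R:ℝ)⁻¹) ^ n := by
    refine h4.trans ?_
    rw [show |(R:ℝ)| = (R:ℝ) from _root_.abs_of_nonneg R.2]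
    refine mul_le_mul_of_nonneg_right ?_ (by positivity)
    rw [inv_mul_le_iff₀ Real.two_pi_pos]
    linarith
  calc (n.factorial : ℝ) * ‖cauchyPowerSeries f z (R:ℝ) n (fun _ => (1:ℂ))‖
      ≤ (n.factorial : ℝ) * (Cb * ((R:ℝ)⁻¹) ^ n) := by
        exact mul_le_mul_of_nonneg_left (h3.trans h6) (by positivity)
    _ = (n.factorial : ℝ) * Cb / (R:ℝ) ^ n := by
        rw [inv_pow]; ring

lemma re_cpow_eq {w : ℂ} (hw : w ≠ 0) (γ : ℝ) :
    (w ^ (γ:ℂ)).re = ‖w‖ ^ γ * Real.cos (γ * w.arg) := by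
  rw [Complex.cpow_def_of_ne_zero hw, Complex.exp_re]
  have h1 : (Complex.log w * (γ:ℂ)).re = Real.log ‖w‖ * γ := by
    simp [Complex.log_re]
  have h2 : (Complex.log w * (γ:ℂ)).im = w.arg * γ := by
    simp [Complex.log_im]
  rw [h1, h2, Real.rpow_def_of_pos (norm_pos_iff.mpr hw), mul_comm w.arg γ]

/-- Lower bound for `‖C₁ w^α + C₂ w^β‖` when `cos (arg w) ≥ -1/3`. -/
lemma phi_lower {α β C₁ C₂ : ℝ} (hα : 0 < α) (hαβ : α < β) (hβ : β ≤ 1)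
    (hC₁ : 0 < C₁) (hC₂ : 0 < C₂) {w : ℂ} (hw : w ≠ 0)
    (hcos : -(1/3 : ℝ) ≤ Real.cos w.arg) :
    min C₁ C₂ / 2 * ‖w‖ ^ β ≤ ‖(C₁:ℂ) * w ^ (α:ℂ) + (C₂:ℂ) * w ^ (β:ℂ)‖ := by
  set γ : ℝ := β - α with hγdef
  have hγ : 0 < γ := by simp [hγdef]; linarith
  have hγ1 : γ ≤ 1 := by simp [hγdef]; linarith
  have habs : 0 < ‖w‖ := norm_pos_iff.mpr hw
  -- factorization
  have hfac : (C₁:ℂ) * w ^ (α:ℂ) + (C₂:ℂ) * w ^ (β:ℂ)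
      = w ^ (α:ℂ) * ((C₁:ℂ) + (C₂:ℂ) * w ^ (γ:ℂ)) := by
    have : w ^ (β:ℂ) = w ^ (α:ℂ) * w ^ (γ:ℂ) := by
      rw [← Complex.cpow_add _ _ hw]
      norm_num [hγdef]
    rw [this]; ring
  rw [hfac, norm_mul]
  have hnormα : ‖w ^ (α:ℂ)‖ = ‖w‖ ^ α := Complex.norm_cpow_real w α
  -- cos bound for γ * arg w
  have harg : |w.arg| ≤ π := Complex.abs_arg_le_pi w
  have hcos2 : -(1/3 : ℝ) ≤ Real.cos (γ * w.arg) := by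
    have h1 : Real.cos w.arg ≤ Real.cos (γ * w.arg) := by
      rw [← Real.cos_abs w.arg, ← Real.cos_abs (γ * w.arg)]
      apply Real.cos_le_cos_of_nonneg_of_le_pi (abs_nonneg _) harg
      rw [abs_mul, _root_.abs_of_nonneg hγ.le]
      nlinarith [abs_nonneg w.arg]
    linarith
  -- lower bound on the second factor
  set v : ℂ := (C₂:ℂ) * w ^ (γ:ℂ) with hvdef
  have hvnorm : ‖v‖ = C₂ * ‖w‖ ^ γ := by
    rw [hvdef, norm_mul, Complex.norm_real, Real.norm_of_nonneg hC₂.le,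
      Complex.norm_cpow_real]
  have hvre : -(1/3 : ℝ) * ‖v‖ ≤ v.re := by
    have : v.re = C₂ * (‖w‖ ^ γ * Real.cos (γ * w.arg)) := by
      simp [hvdef, Complex.mul_re, Complex.ofReal_re, Complex.ofReal_im, re_cpow_eq hw]
    rw [this, hvnorm]
    have hwγ : (0:ℝ) ≤ ‖w‖ ^ γ := Real.rpow_nonneg habs.le γ
    have hww : ‖w‖ = ‖w‖ := rfl
    rw [hww]
    nlinarith [mul_le_mul_of_nonneg_left hcos2 (mul_nonneg hC₂.le hwγ)]
  have hkey : max C₁ ‖v‖ / 2 ≤ ‖(C₁:ℂ) + v‖ := by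
    have hsq : (max C₁ ‖v‖ / 2) ^ 2 ≤ ‖(C₁:ℂ) + v‖ ^ 2 := by
      have hns : ‖(C₁:ℂ) + v‖ ^ 2 = (C₁ + v.re)^2 + v.im^2 := by
        rw [Complex.sq_norm, Complex.normSq_apply]
        simp
        ring
      have him : ‖v‖^2 = v.re^2 + v.im^2 := by
        rw [Complex.sq_norm, Complex.normSq_apply]
        ring
      have hvn : 0 ≤ ‖v‖ := norm_nonneg v
      have hrele : v.re ≤ ‖v‖ := Complex.re_le_norm v
      rcases max_cases C₁ ‖v‖ with ⟨hm, _⟩ | ⟨hm, _⟩ <;> rw [hm, hns] <;> nlinarith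
    have h2 : 0 ≤ max C₁ ‖v‖ / 2 := by positivity
    exact (pow_le_pow_iff_left₀ h2 (norm_nonneg _) two_ne_zero).mp hsq
  -- conclude
  have hwnorm : ‖w‖ = ‖w‖ := rfl
  have hwpos : 0 < ‖w‖ := by rw [hwnorm]; exact habs
  have hmin : min C₁ C₂ / 2 * ‖w‖ ^ β ≤ ‖w‖ ^ α * (max C₁ ‖v‖ / 2) := by
    rw [hvnorm]
    rcases le_total ‖w‖ 1 with h1 | h1
    · have h2 : ‖w‖ ^ β ≤ ‖w‖ ^ α := Real.rpow_le_rpow_of_exponent_ge hwpos h1 hαβ.le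
      have h3 : min C₁ C₂ ≤ max C₁ (C₂ * ‖w‖ ^ γ) := le_trans (min_le_left _ _) (le_max_left _ _)
      have h4 : 0 ≤ ‖w‖ ^ α := Real.rpow_nonneg hwpos.le α
      have h5 : 0 < min C₁ C₂ := lt_min hC₁ hC₂
      calc min C₁ C₂ / 2 * ‖w‖ ^ β ≤ min C₁ C₂ / 2 * ‖w‖ ^ α := by
            exact mul_le_mul_of_nonneg_left h2 (by positivity)
        _ ≤ ‖w‖ ^ α * (max C₁ (C₂ * ‖w‖ ^ γ) / 2) := by
            rw [mul_comm (min C₁ C₂ / 2)]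
            exact mul_le_mul_of_nonneg_left (by linarith) h4
    · have h2 : ‖w‖ ^ α * ‖w‖ ^ γ = ‖w‖ ^ β := by
        rw [← Real.rpow_add hwpos]
        norm_num [hγdef]
      have h3 : min C₁ C₂ * ‖w‖ ^ γ ≤ max C₁ (C₂ * ‖w‖ ^ γ) := by
        refine le_trans ?_ (le_max_right _ _)
        exact mul_le_mul_of_nonneg_right (min_le_right _ _) (Real.rpow_nonneg hwpos.le γ)
      have h4 : 0 ≤ ‖w‖ ^ α := Real.rpow_nonneg hwpos.le α
      calc min C₁ C₂ / 2 * ‖w‖ ^ β = ‖w‖ ^ α * (min C₁ C₂ * ‖w‖ ^ γ / 2) := by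
            rw [← h2]; ring
        _ ≤ ‖w‖ ^ α * (max C₁ (C₂ * ‖w‖ ^ γ) / 2) := by
            exact mul_le_mul_of_nonneg_left (by linarith) h4
  refine hmin.trans ?_
  rw [hnormα]
  exact mul_le_mul_of_nonneg_left hkey (Real.rpow_nonneg hwpos.le α)

lemma deriv_pointwise_bound {α β C₁ C₂ : ℝ}
    (hα : 0 < α) (hαβ : α < β) (hβ : β ≤ 1) (hC₁ : 0 < C₁) (hC₂ : 0 < C₂)
    (N : ℕ) {z : ℂ} (hz : 0 < z.re) :
    ‖iteratedDeriv N
        (fun w : ℂ => 1 / ((C₁ : ℂ) * w ^ (α : ℂ) + (C₂ : ℂ) * w ^ (β : ℂ))) z‖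
      ≤ ((N.factorial : ℝ) * (min C₁ C₂ / 2 * ((3:ℝ)/4) ^ β)⁻¹ * 4 ^ N)
          * ‖z‖ ^ (-(N : ℝ) - β) := by
  set m : ℝ := min C₁ C₂ with hm
  have hm0 : 0 < m := lt_min hC₁ hC₂
  have hz0 : z ≠ 0 := fun h => by simp [h] at hz
  have hzn : 0 < ‖z‖ := norm_pos_iff.mpr hz0
  set ρ : ℝ := ‖z‖ / 4 with hρdef
  have hρ : 0 < ρ := by positivity
  -- facts about points of the closed ball
  have hball : ∀ w ∈ closedBall z ρ, 3 * ρ ≤ ‖w‖ ∧ w ≠ 0 ∧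
      -(1/3 : ℝ) ≤ Real.cos w.arg ∧ z.re - ρ ≤ w.re := by
    intro w hw
    rw [mem_closedBall, dist_eq_norm] at hw
    have h1 : ‖z‖ - ρ ≤ ‖w‖ := by
      have := norm_sub_norm_le z w
      rw [show z - w = -(w - z) by ring, norm_neg] at this
      linarith
    have h2 : 3 * ρ ≤ ‖w‖ := by rw [hρdef] at h1 ⊢; linarith
    have hw0 : w ≠ 0 := by
      intro h; rw [h, norm_zero] at h2; linarith
    have h3 : z.re - ρ ≤ w.re := by
      have := Complex.abs_re_le_norm (w - z)
      have h4 : |w.re - z.re| ≤ ‖w - z‖ := by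
        simpa [Complex.sub_re] using this
      have hwz : ‖w - z‖ ≤ ρ := hw
      have := abs_le.mp h4
      linarith [this.1]
    refine ⟨h2, hw0, ?_, h3⟩
    rw [Complex.cos_arg hw0]
    have habsw : (0:ℝ) < ‖w‖ := norm_pos_iff.mpr hw0
    rw [le_div_iff₀ habsw]
    have : ‖w‖ = ‖w‖ := rfl
    nlinarith [h2.trans_eq this, hz]
  -- w in the ball is in the slit plane
  have hslit : ∀ w ∈ closedBall z ρ, w ∈ Complex.slitPlane := by
    intro w hw
    obtain ⟨h2, hw0, _, h3⟩ := hball w hw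
    rw [Complex.mem_slitPlane_iff]
    by_cases him : w.im = 0
    · left
      have habs : |w.re| = ‖w‖ := Complex.abs_re_eq_norm.mpr him
      rw [← habs] at h2
      by_contra hle
      push_neg at hle
      rw [abs_of_nonpos hle, hρdef] at h2
      rw [hρdef] at h3
      linarith
    · right; exact him
  -- the function is differentiable on the closed ball, with explicit bound on the sphere
  set f : ℂ → ℂ := fun w : ℂ => 1 / ((C₁ : ℂ) * w ^ (α : ℂ) + (C₂ : ℂ) * w ^ (β : ℂ)) with hfdef
  have hΦlow : ∀ w ∈ closedBall z ρ,
      m / 2 * (3 * ρ) ^ β ≤ ‖(C₁:ℂ) * w ^ (α:ℂ) + (C₂:ℂ) * w ^ (β:ℂ)‖ := by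
    intro w hw
    obtain ⟨h2, hw0, hcos, _⟩ := hball w hw
    refine le_trans ?_ (phi_lower hα hαβ hβ hC₁ hC₂ hw0 hcos)
    have : (3*ρ) ^ β ≤ ‖w‖ ^ β :=
      Real.rpow_le_rpow (by positivity) h2 (by linarith)
    have h5 : (0:ℝ) ≤ m / 2 := by positivity
    exact mul_le_mul_of_nonneg_left this h5
  have hΦne : ∀ w ∈ closedBall z ρ,
      ((C₁:ℂ) * w ^ (α:ℂ) + (C₂:ℂ) * w ^ (β:ℂ)) ≠ 0 := by
    intro w hw
    have := hΦlow w hw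
    intro h0
    rw [h0, norm_zero] at this
    have : (0:ℝ) < m / 2 * (3 * ρ) ^ β := by positivity
    linarith
  have hdiff : DifferentiableOn ℂ f (closedBall z ρ) := by
    intro w hw
    apply DifferentiableAt.differentiableWithinAt
    have hd : DifferentiableAt ℂ
        (fun w : ℂ => (C₁ : ℂ) * w ^ (α : ℂ) + (C₂ : ℂ) * w ^ (β : ℂ)) w := by
      apply DifferentiableAt.add
      · exact (differentiableAt_id.cpow (differentiableAt_const _) (hslit w hw)).const_mul _
      · exact (differentiableAt_id.cpow (differentiableAt_const _) (hslit w hw)).const_mul _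
    exact (differentiableAt_const 1).div hd (hΦne w hw)
  set Cb : ℝ := (m / 2 * (3 * ρ) ^ β)⁻¹ with hCbdef
  have hCb : ∀ w ∈ sphere z ρ, ‖f w‖ ≤ Cb := by
    intro w hw
    have hw' : w ∈ closedBall z ρ := sphere_subset_closedBall hw
    rw [hfdef]
    simp only [one_div, norm_inv]
    rw [hCbdef]
    apply inv_anti₀ (by positivity) (hΦlow w hw')
  have := cauchy_deriv_bound hρ hdiff hCb N
  refine this.trans ?_
  -- arithmetic
  have e1 : (3 * ρ) ^ β = (3/4 : ℝ) ^ β * ‖z‖ ^ β := by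
    rw [← Real.mul_rpow (by norm_num) hzn.le, hρdef]; ring_nf
  have e2 : ‖z‖ ^ (-(N:ℝ) - β) = (‖z‖ ^ (N:ℕ) * ‖z‖ ^ β)⁻¹ := by
    rw [show -(N:ℝ) - β = -((N:ℝ) + β) by ring, Real.rpow_neg hzn.le,
      Real.rpow_add hzn, Real.rpow_natCast]
  rw [e2, hCbdef, e1, hρdef]
  have h34 : (0:ℝ) < (3/4 : ℝ) ^ β := by positivity
  have hzNβ : (0:ℝ) < ‖z‖ ^ (N:ℕ) * ‖z‖ ^ β := by positivity
  have hzβ : (0:ℝ) < ‖z‖ ^ β := by positivity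
  have hzN : (0:ℝ) < ‖z‖ ^ (N:ℕ) := by positivity
  have hne1 : m ≠ 0 := hm0.ne'
  have hne2 : ((3:ℝ)/4) ^ β ≠ 0 := h34.ne'
  have hne3 : ‖z‖ ^ β ≠ 0 := hzβ.ne'
  have hne4 : ‖z‖ ^ (N:ℕ) ≠ 0 := hzN.ne'
  rw [div_pow]
  field_simp
  ring_nf
  exact le_rfl

/-- Uniform bound for the `N`-th derivative of `1/Φ`, `Φ(z) = C₁z^α + C₂z^β`, away from
the real axis, and the resulting uniform-in-`λ` integrability on vertical lines. -/
theorem deriv_bound_sum_two_stable (α β C₁ C₂ : ℝ)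
    (hα : 0 < α) (hαβ : α < β) (hβ : β ≤ 1) (hC₁ : 0 < C₁) (hC₂ : 0 < C₂)
    (N : ℕ) (hN : 1 ≤ N) (r : ℝ) (hr : 0 < r) :
    (∃ C : ℝ, 0 < C ∧ ∀ z : ℂ, 0 < z.re → r < |z.im| →
      ‖iteratedDeriv N
          (fun w : ℂ => 1 / ((C₁ : ℂ) * w ^ (α : ℂ) + (C₂ : ℂ) * w ^ (β : ℂ))) z‖
        ≤ C * ‖z‖ ^ (-(N : ℝ) - β)) ∧
    (∃ M : ℝ≥0∞, M < ⊤ ∧ ∀ lam : ℝ, 0 < lam →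
      (∫⁻ θ in {θ : ℝ | r ≤ |θ|},
        ENNReal.ofReal
          ‖iteratedDeriv N
              (fun w : ℂ => 1 / ((C₁ : ℂ) * w ^ (α : ℂ) + (C₂ : ℂ) * w ^ (β : ℂ)))
            ((lam : ℂ) + θ * Complex.I)‖) ≤ M) := by
  have hm0 : 0 < min C₁ C₂ := lt_min hC₁ hC₂
  set C : ℝ := (N.factorial : ℝ) * (min C₁ C₂ / 2 * ((3:ℝ)/4) ^ β)⁻¹ * 4 ^ N with hCdef
  have hC0 : 0 < C := by
    rw [hCdef]
    have : (0:ℝ) < (N.factorial : ℝ) := by exact_mod_cast N.factorial_pos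
    positivity
  constructor
  · exact ⟨C, hC0, fun z hz _ => deriv_pointwise_bound hα hαβ hβ hC₁ hC₂ N hz⟩
  -- integral part
  set e : ℝ := -(N : ℝ) - β with hedef
  have he : e < -1 := by
    rw [hedef]
    have : (1:ℝ) ≤ (N:ℝ) := by exact_mod_cast hN
    linarith
  have he0 : e ≤ 0 := by linarith
  set s : Set ℝ := {θ : ℝ | r ≤ |θ|} with hsdef
  set g : ℝ → ℝ := fun θ => C * |θ| ^ e with hgdef
  -- integrability of the dominating function
  have hI1 : IntegrableOn g (Set.Ici r) := by
    rw [integrableOn_Ici_iff_integrableOn_Ioi]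
    have h1 : IntegrableOn (fun θ : ℝ => C * θ ^ e) (Set.Ioi r) :=
      (integrableOn_Ioi_rpow_of_lt he hr).const_mul C
    refine h1.congr_fun ?_ measurableSet_Ioi
    intro θ hθ
    rw [hgdef]
    simp only
    rw [abs_of_pos (hr.trans hθ)]
  have hI2 : IntegrableOn g (Set.Iic (-r)) := by
    have hpre : Set.Iic (-r) = Neg.neg ⁻¹' (Set.Ici r) := by
      ext x; simp [le_neg]
    rw [hpre]
    have hgeq : g ∘ Neg.neg = g := by
      funext x; simp [hgdef, abs_neg]
    have h2 := ((Measure.measurePreserving_neg (volume : Measure ℝ)).integrableOn_comp_preimage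
      (Homeomorph.neg ℝ).measurableEmbedding (f := g) (s := Set.Ici r)).mpr hI1
    rwa [hgeq] at h2
  have hsub : s ⊆ Set.Iic (-r) ∪ Set.Ici r := by
    intro θ hθ
    have hθ' : r ≤ |θ| := hθ
    rcases le_abs.mp hθ' with h | h
    · exact Or.inr h
    · exact Or.inl (by simpa [le_neg] using h)
  have hgint : IntegrableOn g s := (hI2.union hI1).mono_set hsub
  refine ⟨∫⁻ θ in s, ENNReal.ofReal (g θ), hgint.setLIntegral_lt_top, ?_⟩
  intro lam hlam
  refine setLIntegral_mono ?_ ?_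
  · apply Measurable.ennreal_ofReal
    rw [hgdef]
    measurability
  · intro θ hθ
    rw [hsdef] at hθ
    have hθ0 : 0 < |θ| := lt_of_lt_of_le hr hθ
    set z : ℂ := (lam : ℂ) + θ * Complex.I with hzdef
    have hzre : 0 < z.re := by simp [hzdef, hlam]
    have hzim : z.im = θ := by simp [hzdef]
    have h1 := deriv_pointwise_bound hα hαβ hβ hC₁ hC₂ N hzre
    apply ENNReal.ofReal_le_ofReal
    refine h1.trans ?_
    rw [hgdef]
    refine mul_le_mul_of_nonneg_left ?_ hC0.le
    refine Real.rpow_le_rpow_of_nonpos hθ0 ?_ he0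
    rw [← hzim]
    exact (Complex.abs_im_le_norm z)
end

section
/- Let 0 < α ≤ 1 and Φ(z) = log(1 + z^α) (principal branches). For each N ∈ ℕ there exist polynomials p_{1,N}, …, p_{N,N} in one variable, each of degree at most N, such that for every z in the open right half-plane, (d/dz)^N (1/Φ(z)) = Σ_{k=1}^N p_{k,N}(z^α) / ((log(1+z^α))^{k+1} (z + z^{α+1})^N). -/
open Complex

private lemma re_cpow_pos {α : ℝ} (hα0 : 0 < α) (hα1 : α ≤ 1) {z : ℂ} (hz : 0 < z.re) :
    0 < (z ^ (α : ℂ)).re := by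
  have hz0 : z ≠ 0 := fun h => by simp [h] at hz
  rw [Complex.cpow_def_of_ne_zero hz0, Complex.exp_re]
  have harg : |Complex.arg z| < Real.pi / 2 :=
    Complex.abs_arg_lt_pi_div_two_iff.2 (Or.inl hz)
  have him : (Complex.log z * (α : ℂ)).im = α * Complex.arg z := by
    simp [Complex.mul_im, Complex.log_im]; ring
  rw [him]
  have habs : |α * Complex.arg z| < Real.pi / 2 := by
    rw [abs_mul, abs_of_pos hα0]
    calc α * |Complex.arg z| ≤ 1 * |Complex.arg z| :=
          mul_le_mul_of_nonneg_right hα1 (abs_nonneg _)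
      _ = |Complex.arg z| := one_mul _
      _ < Real.pi / 2 := harg
  have hcos : 0 < Real.cos (α * Complex.arg z) := by
    obtain ⟨h1, h2⟩ := abs_lt.1 habs
    exact Real.cos_pos_of_mem_Ioo ⟨h1, h2⟩
  positivity

private lemma term_hasDerivAt (α : ℝ) (hα0 : 0 < α) (hα1 : α ≤ 1) (m k : ℕ) (P : Polynomial ℂ)
    {z : ℂ} (hz : 0 < z.re) :
    HasDerivAt (fun w : ℂ => P.eval (w ^ (α:ℂ)) /
        (Complex.log (1 + w ^ (α:ℂ)) ^ (k+1) * (w + w ^ ((α:ℂ)+1)) ^ (m+1)))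
      ((((α:ℂ) * z^(α:ℂ) * (1 + z^(α:ℂ)) * P.derivative.eval (z^(α:ℂ))
            - ((m:ℂ)+1) * (1 + ((α:ℂ)+1) * z^(α:ℂ)) * P.eval (z^(α:ℂ)))
          / (Complex.log (1 + z^(α:ℂ)) ^ (k+1) * (z + z^((α:ℂ)+1)) ^ (m+2)))
        + ((-(((k:ℂ)+1) * (α:ℂ) * z^(α:ℂ) * P.eval (z^(α:ℂ))))
          / (Complex.log (1 + z^(α:ℂ)) ^ (k+2) * (z + z^((α:ℂ)+1)) ^ (m+2)))) z := by
  have hz0 : z ≠ 0 := fun h => by simp [h] at hz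
  have hzslit : z ∈ Complex.slitPlane := Complex.mem_slitPlane_iff.2 (Or.inl hz)
  have hure : 0 < (z ^ (α:ℂ)).re := re_cpow_pos hα0 hα1 hz
  have hu0 : z ^ (α:ℂ) ≠ 0 := fun h => by simp [h] at hure
  have h1ure : 0 < (1 + z ^ (α:ℂ)).re := by
    simp only [Complex.add_re, Complex.one_re]; linarith
  have h1uslit : 1 + z ^ (α:ℂ) ∈ Complex.slitPlane := Complex.mem_slitPlane_iff.2 (Or.inl h1ure)
  have h1u0 : 1 + z ^ (α:ℂ) ≠ 0 := fun h => by simp [h] at h1ure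
  have hL0 : Complex.log (1 + z ^ (α:ℂ)) ≠ 0 := by
    intro h
    have h2 := Complex.exp_log h1u0
    rw [h, Complex.exp_zero] at h2
    exact hu0 (by linear_combination - h2)
  have hexp : z ^ ((α:ℂ)+1) = z ^ (α:ℂ) * z := by
    rw [Complex.cpow_add _ _ hz0, Complex.cpow_one]
  have hDfac : z + z ^ ((α:ℂ)+1) = z * (1 + z ^ (α:ℂ)) := by rw [hexp]; ring
  have hD0 : z + z ^ ((α:ℂ)+1) ≠ 0 := by rw [hDfac]; exact mul_ne_zero hz0 h1u0
  have hu' : HasDerivAt (fun w : ℂ => w ^ (α:ℂ)) ((α:ℂ) * z ^ ((α:ℂ)-1)) z :=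
    (Complex.hasStrictDerivAt_cpow_const hzslit).hasDerivAt
  have hn : HasDerivAt (fun w : ℂ => P.eval (w ^ (α:ℂ)))
      (P.derivative.eval (z ^ (α:ℂ)) * ((α:ℂ) * z ^ ((α:ℂ)-1))) z :=
    by have h := (P.hasDerivAt (z ^ (α:ℂ))).comp z hu'; exact h
  have hL' : HasDerivAt (fun w : ℂ => Complex.log (1 + w ^ (α:ℂ)))
      ((1 + z ^ (α:ℂ))⁻¹ * ((α:ℂ) * z ^ ((α:ℂ)-1))) z :=
    by have h := (Complex.hasDerivAt_log h1uslit).comp z (hu'.const_add 1); exact h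
  have hp1 : HasDerivAt (fun w : ℂ => w ^ ((α:ℂ)+1)) (((α:ℂ)+1) * z ^ (α:ℂ)) z := by
    have h3 := (Complex.hasStrictDerivAt_cpow_const (c := (α:ℂ)+1) hzslit).hasDerivAt
    simpa [show (α:ℂ)+1-1 = (α:ℂ) by ring] using h3
  have hD' : HasDerivAt (fun w : ℂ => w + w ^ ((α:ℂ)+1)) (1 + ((α:ℂ)+1) * z ^ (α:ℂ)) z :=
    (hasDerivAt_id z).add hp1
  have hg := (hL'.pow (k+1)).mul (hD'.pow (m+1))
  have hne : Complex.log (1 + z ^ (α:ℂ)) ^ (k+1) * (z + z ^ ((α:ℂ)+1)) ^ (m+1) ≠ 0 :=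
    mul_ne_zero (pow_ne_zero _ hL0) (pow_ne_zero _ hD0)
  have hdiv : HasDerivAt (fun w : ℂ => P.eval (w ^ (α:ℂ)) /
      (Complex.log (1 + w ^ (α:ℂ)) ^ (k+1) * (w + w ^ ((α:ℂ)+1)) ^ (m+1))) _ z := hn.div hg hne
  convert hdiv using 1
  have h1 : z ^ ((α:ℂ)-1) = z ^ (α:ℂ) / z := by
    rw [Complex.cpow_sub _ _ hz0, Complex.cpow_one]
  simp only [Nat.add_sub_cancel, Nat.cast_add, Nat.cast_one, h1, hDfac, Pi.mul_apply, Pi.pow_apply]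
  field_simp
  ring

/-- Structure of the `N`-th derivative of `1/log(1+z^α)` on the right half-plane:
there are polynomials `p_{k,N}` of degree at most `N` with
`(d/dz)^N (1/Φ(z)) = Σ_{k=1}^N p_{k,N}(z^α) / ((log(1+z^α))^{k+1} (z+z^{α+1})^N)`. -/
theorem iteratedDeriv_inv_log_geometric (α : ℝ) (hα0 : 0 < α) (hα1 : α ≤ 1)
    (N : ℕ) (hN : 1 ≤ N) :
    ∃ p : ℕ → Polynomial ℂ,
      (∀ k ∈ Finset.Icc 1 N, (p k).degree ≤ N) ∧
      ∀ z : ℂ, 0 < z.re →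
        iteratedDeriv N (fun w : ℂ => 1 / Complex.log (1 + w ^ (α : ℂ))) z
          = ∑ k ∈ Finset.Icc 1 N,
              (p k).eval (z ^ (α : ℂ)) /
                ((Complex.log (1 + z ^ (α : ℂ))) ^ (k + 1) *
                  (z + z ^ ((α : ℂ) + 1)) ^ N) := by
  suffices h : ∃ p : ℕ → Polynomial ℂ,
      (∀ k, k ∉ Finset.Icc 1 N → p k = 0) ∧
      (∀ k, (p k).natDegree ≤ N) ∧
      ∀ z : ℂ, 0 < z.re →
        iteratedDeriv N (fun w : ℂ => 1 / Complex.log (1 + w ^ (α : ℂ))) z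
          = ∑ k ∈ Finset.Icc 1 N,
              (p k).eval (z ^ (α : ℂ)) /
                ((Complex.log (1 + z ^ (α : ℂ))) ^ (k + 1) *
                  (z + z ^ ((α : ℂ) + 1)) ^ N) by
    obtain ⟨p, _, hdeg, hval⟩ := h
    exact ⟨p, fun k _ => Polynomial.natDegree_le_iff_degree_le.mp (hdeg k), hval⟩
  induction N, hN using Nat.le_induction with
  | base =>
    refine ⟨fun k => if k = 1 then Polynomial.C (-(α:ℂ)) * Polynomial.X else 0, ?_, ?_, ?_⟩
    · intro k hk
      simp only [Finset.mem_Icc] at hk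
      simp only [ite_eq_right_iff]
      intro h; exact absurd h (by omega)
    · intro k
      rcases eq_or_ne k 1 with h | h
      · subst h
        simp only [if_pos rfl]
        exact le_trans (Polynomial.natDegree_mul_le) (by simp)
      · simp [h]
    · intro z hz
      have hz0 : z ≠ 0 := fun h => by simp [h] at hz
      have hzslit : z ∈ Complex.slitPlane := Complex.mem_slitPlane_iff.2 (Or.inl hz)
      have hure : 0 < (z ^ (α:ℂ)).re := re_cpow_pos hα0 hα1 hz
      have hu0 : z ^ (α:ℂ) ≠ 0 := fun h => by simp [h] at hure
      have h1ure : 0 < (1 + z ^ (α:ℂ)).re := by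
        simp only [Complex.add_re, Complex.one_re]; linarith
      have h1uslit : 1 + z ^ (α:ℂ) ∈ Complex.slitPlane :=
        Complex.mem_slitPlane_iff.2 (Or.inl h1ure)
      have h1u0 : 1 + z ^ (α:ℂ) ≠ 0 := fun h => by simp [h] at h1ure
      have hL0 : Complex.log (1 + z ^ (α:ℂ)) ≠ 0 := by
        intro h
        have h2 := Complex.exp_log h1u0
        rw [h, Complex.exp_zero] at h2
        exact hu0 (by linear_combination - h2)
      have hexp : z ^ ((α:ℂ)+1) = z ^ (α:ℂ) * z := by
        rw [Complex.cpow_add _ _ hz0, Complex.cpow_one]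
      have hDfac : z + z ^ ((α:ℂ)+1) = z * (1 + z ^ (α:ℂ)) := by rw [hexp]; ring
      have hu' : HasDerivAt (fun w : ℂ => w ^ (α:ℂ)) ((α:ℂ) * z ^ ((α:ℂ)-1)) z :=
        (Complex.hasStrictDerivAt_cpow_const hzslit).hasDerivAt
      have hL' : HasDerivAt (fun w : ℂ => Complex.log (1 + w ^ (α:ℂ)))
          ((1 + z ^ (α:ℂ))⁻¹ * ((α:ℂ) * z ^ ((α:ℂ)-1))) z :=
        by have h := (Complex.hasDerivAt_log h1uslit).comp z (hu'.const_add 1); exact h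
      have hinv : HasDerivAt (fun w : ℂ => (Complex.log (1 + w ^ (α:ℂ)))⁻¹) _ z := hL'.inv hL0
      have hfun : (fun w : ℂ => 1 / Complex.log (1 + w ^ (α:ℂ)))
          = fun w : ℂ => (Complex.log (1 + w ^ (α:ℂ)))⁻¹ := by
        funext w; rw [one_div]
      rw [iteratedDeriv_one, hfun, hinv.deriv]
      have h1 : z ^ ((α:ℂ)-1) = z ^ (α:ℂ) / z := by
        rw [Complex.cpow_sub _ _ hz0, Complex.cpow_one]
      have hbeta : (fun k => if k = 1 then Polynomial.C (-(α:ℂ)) * Polynomial.X else 0) 1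
          = Polynomial.C (-(α:ℂ)) * Polynomial.X := rfl
      rw [Finset.Icc_self, Finset.sum_singleton, hbeta]
      simp only [h1, hDfac, Polynomial.eval_mul, Polynomial.eval_C, Polynomial.eval_X]
      field_simp
  | succ N hN1 ih =>
    obtain ⟨m, rfl⟩ : ∃ m, N = m + 1 := ⟨N - 1, (Nat.succ_pred_eq_of_pos hN1).symm⟩
    obtain ⟨p, hp0, hpdeg, hpval⟩ := ih
    set q : ℕ → Polynomial ℂ := fun k =>
      Polynomial.C (α:ℂ) * Polynomial.X * (1 + Polynomial.X) * (p k).derivative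
        - Polynomial.C ((m:ℂ)+1) * (1 + Polynomial.C ((α:ℂ)+1) * Polynomial.X) * (p k)
        - Polynomial.C ((k:ℂ) * (α:ℂ)) * Polynomial.X * (p (k-1)) with hq
    refine ⟨q, ?_, ?_, ?_⟩
    · intro k hk
      simp only [Finset.mem_Icc, not_and, not_le] at hk
      have h1 : p k = 0 := by
        apply hp0; simp only [Finset.mem_Icc, not_and, not_le]; omega
      have h2 : p (k-1) = 0 := by
        apply hp0; simp only [Finset.mem_Icc, not_and, not_le]; omega
      simp [hq, h1, h2]
    · intro k
      have hd : (p k).derivative.natDegree ≤ m := by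
        refine le_trans (Polynomial.natDegree_derivative_le _) ?_
        have := hpdeg k; omega
      have t1 : (Polynomial.C (α:ℂ) * Polynomial.X * (1 + Polynomial.X)
          * (p k).derivative).natDegree ≤ m + 2 := by
        refine le_trans (Polynomial.natDegree_mul_le) ?_
        have h2 : (Polynomial.C (α:ℂ) * Polynomial.X * (1 + Polynomial.X)).natDegree ≤ 2 := by
          refine le_trans (Polynomial.natDegree_mul_le) ?_
          have h3 : (Polynomial.C (α:ℂ) * Polynomial.X).natDegree ≤ 1 :=
            le_trans (Polynomial.natDegree_mul_le) (by simp)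
          have h4 : ((1 : Polynomial ℂ) + Polynomial.X).natDegree ≤ 1 :=
            le_trans (Polynomial.natDegree_add_le _ _) (by simp)
          omega
        omega
      have t2 : (Polynomial.C ((m:ℂ)+1) * (1 + Polynomial.C ((α:ℂ)+1) * Polynomial.X)
          * (p k)).natDegree ≤ m + 2 := by
        refine le_trans (Polynomial.natDegree_mul_le) ?_
        have h2 : (Polynomial.C ((m:ℂ)+1) * (1 + Polynomial.C ((α:ℂ)+1)
            * Polynomial.X)).natDegree ≤ 1 := by
          refine le_trans (Polynomial.natDegree_mul_le) ?_
          have h4 : ((1 : Polynomial ℂ) + Polynomial.C ((α:ℂ)+1) * Polynomial.X).natDegree ≤ 1 := by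
            refine le_trans (Polynomial.natDegree_add_le _ _) ?_
            simp only [Polynomial.natDegree_one, max_le_iff]
            exact ⟨Nat.zero_le _, le_trans (Polynomial.natDegree_mul_le) (by simp)⟩
          simp only [Polynomial.natDegree_C]; omega
        have := hpdeg k; omega
      have t3 : (Polynomial.C ((k:ℂ) * (α:ℂ)) * Polynomial.X * (p (k-1))).natDegree ≤ m + 2 := by
        refine le_trans (Polynomial.natDegree_mul_le) ?_
        have h3 : (Polynomial.C ((k:ℂ) * (α:ℂ)) * Polynomial.X).natDegree ≤ 1 :=
          le_trans (Polynomial.natDegree_mul_le)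
            (by rw [Polynomial.natDegree_C, Polynomial.natDegree_X])
        have := hpdeg (k-1); omega
      calc (q k).natDegree ≤ _ := Polynomial.natDegree_sub_le _ _
        _ ≤ m + 2 := by
          rw [max_le_iff]
          exact ⟨le_trans (Polynomial.natDegree_sub_le _ _) (by omega), t3⟩
    · intro z hz
      have hz0 : z ≠ 0 := fun h => by simp [h] at hz
      have hure : 0 < (z ^ (α:ℂ)).re := re_cpow_pos hα0 hα1 hz
      have hu0 : z ^ (α:ℂ) ≠ 0 := fun h => by simp [h] at hure
      have h1ure : 0 < (1 + z ^ (α:ℂ)).re := by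
        simp only [Complex.add_re, Complex.one_re]; linarith
      have h1u0 : 1 + z ^ (α:ℂ) ≠ 0 := fun h => by simp [h] at h1ure
      have hL0 : Complex.log (1 + z ^ (α:ℂ)) ≠ 0 := by
        intro h
        have h2 := Complex.exp_log h1u0
        rw [h, Complex.exp_zero] at h2
        exact hu0 (by linear_combination - h2)
      have hexp : z ^ ((α:ℂ)+1) = z ^ (α:ℂ) * z := by
        rw [Complex.cpow_add _ _ hz0, Complex.cpow_one]
      have hDfac : z + z ^ ((α:ℂ)+1) = z * (1 + z ^ (α:ℂ)) := by rw [hexp]; ring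
      have hD0 : z + z ^ ((α:ℂ)+1) ≠ 0 := by rw [hDfac]; exact mul_ne_zero hz0 h1u0
      rw [iteratedDeriv_succ]
      have hopen : IsOpen {w : ℂ | 0 < w.re} := isOpen_lt continuous_const Complex.continuous_re
      have hev : iteratedDeriv (m+1) (fun w : ℂ => 1 / Complex.log (1 + w ^ (α : ℂ)))
          =ᶠ[nhds z] (fun w : ℂ => ∑ k ∈ Finset.Icc 1 (m+1),
              (p k).eval (w ^ (α : ℂ)) /
                ((Complex.log (1 + w ^ (α : ℂ))) ^ (k + 1) *
                  (w + w ^ ((α : ℂ) + 1)) ^ (m+1))) := by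
        filter_upwards [hopen.mem_nhds hz] with w hw using hpval w hw
      rw [hev.deriv_eq]
      have hsum : HasDerivAt (fun w : ℂ => ∑ k ∈ Finset.Icc 1 (m+1),
              (p k).eval (w ^ (α : ℂ)) /
                ((Complex.log (1 + w ^ (α : ℂ))) ^ (k + 1) *
                  (w + w ^ ((α : ℂ) + 1)) ^ (m+1)))
          (∑ k ∈ Finset.Icc 1 (m+1),
            ((((α:ℂ) * z^(α:ℂ) * (1 + z^(α:ℂ)) * (p k).derivative.eval (z^(α:ℂ))
                - ((m:ℂ)+1) * (1 + ((α:ℂ)+1) * z^(α:ℂ)) * (p k).eval (z^(α:ℂ)))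
              / (Complex.log (1 + z^(α:ℂ)) ^ (k+1) * (z + z^((α:ℂ)+1)) ^ (m+2)))
            + ((-(((k:ℂ)+1) * (α:ℂ) * z^(α:ℂ) * (p k).eval (z^(α:ℂ))))
              / (Complex.log (1 + z^(α:ℂ)) ^ (k+2) * (z + z^((α:ℂ)+1)) ^ (m+2))))) z :=
        HasDerivAt.fun_sum (fun k _ => term_hasDerivAt α hα0 hα1 m k (p k) hz)
      rw [hsum.deriv]
      rw [Finset.sum_add_distrib]
      -- abbreviations
      set u := z ^ (α:ℂ) with hu
      set L := Complex.log (1 + u) with hLdef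
      set D := z + z ^ ((α:ℂ)+1) with hDdef
      -- RHS: split q-evaluation
      have hsplit : ∀ k ∈ Finset.Icc 1 (m+2),
          (q k).eval u / (L ^ (k+1) * D ^ (m+2))
          = (((α:ℂ) * u * (1 + u) * (p k).derivative.eval u
                - ((m:ℂ)+1) * (1 + ((α:ℂ)+1) * u) * (p k).eval u) / (L ^ (k+1) * D ^ (m+2)))
            + ((-(((k:ℂ)) * (α:ℂ) * u * (p (k-1)).eval u)) / (L ^ (k+1) * D ^ (m+2))) := by
        intro k _
        rw [hq]
        simp only [Polynomial.eval_sub, Polynomial.eval_mul, Polynomial.eval_add,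
          Polynomial.eval_one, Polynomial.eval_C, Polynomial.eval_X]
        rw [sub_div, sub_eq_add_neg, neg_div]
      rw [Finset.sum_congr rfl hsplit, Finset.sum_add_distrib]
      congr 1
      · -- A part
        rw [Finset.sum_Icc_succ_top (by omega : 1 ≤ m + 2)]
        have hz2 : p (m+2) = 0 := hp0 _ (by simp)
        simp [hz2]
      · -- B part
        have hins : Finset.Icc 1 (m+2) = insert 1 (Finset.Icc 2 (m+2)) := by
          ext x; simp only [Finset.mem_Icc, Finset.mem_insert]; omega
        rw [hins, Finset.sum_insert (by simp)]
        have hz1 : p (1-1) = 0 := hp0 _ (by simp)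
        rw [hz1]
        simp only [Polynomial.eval_zero, mul_zero, neg_zero, zero_div, zero_add]
        have hmap : Finset.Icc 2 (m+2) = (Finset.Icc 1 (m+1)).map
            (addRightEmbedding 1) := by
          rw [Finset.map_add_right_Icc]
        rw [hmap, Finset.sum_map]
        refine Finset.sum_congr rfl fun k hk => ?_
        simp only [addRightEmbedding_apply, Nat.add_sub_cancel]
        push_cast
        try ring_nf
end

section
/- Let 0 < α < β ≤ 1 and C₁, C₂ > 0, and set Φ(z) = C₁ z^α + C₂ z^β. Let n ∈ ℕ ∪ {0} and choose N ∈ ℕ with N > 1 + α - (n+1)(β-α). Then (d/dz)^N ( 1/Φ(z) - (1/C₁) Σ_{k=0}^n (-C₂/C₁)^k z^{-α + k(β-α)} ) = O(|z|^{-N - α + (n+1)(β-α)}) as z → 0 within the open right half-plane {Re z > 0}. -/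
open Complex Filter Asymptotics Metric
open scoped NNReal

lemma cauchy_est {f : ℂ → ℂ} {c : ℂ} {R M : ℝ} (hR : 0 < R)
    (hf : DifferentiableOn ℂ f (closedBall c R))
    (hMf : ∀ w ∈ sphere c R, ‖f w‖ ≤ M) (N : ℕ) :
    ‖iteratedDeriv N f c‖ ≤ (Nat.factorial N : ℝ) * M / R ^ N := by
  have hM : 0 ≤ M := le_trans (norm_nonneg _) (hMf (c + R) (by simp [Complex.dist_eq, abs_of_pos hR]))
  have hR' : ((R.toNNReal : ℝ≥0) : ℝ) = R := Real.coe_toNNReal R hR.le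
  have h : HasFPowerSeriesOnBall f (cauchyPowerSeries f c R.toNNReal) c R.toNNReal :=
    DifferentiableOn.hasFPowerSeriesOnBall (by rwa [hR']) (by simpa using hR)
  have hid : iteratedDeriv N f c = (Nat.factorial N : ℂ) * (cauchyPowerSeries f c R.toNNReal N fun _ => 1) := by
    have h1 := h.factorial_smul (1 : ℂ) N
    have h2 := iteratedFDeriv_apply_eq_iteratedDeriv_mul_prod (𝕜 := ℂ) (n := N)
      (f := f) (x := c) (m := fun _ => (1:ℂ))
    simp only [Finset.prod_const_one, one_smul] at h2
    rw [← h2, ← h1, nsmul_eq_mul]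
  rw [hid]
  have hle : ‖cauchyPowerSeries f c R.toNNReal N fun _ => (1:ℂ)‖ ≤
      ‖cauchyPowerSeries f c R.toNNReal N‖ := by
    simpa using (cauchyPowerSeries f c R.toNNReal N).le_opNorm (fun _ => (1:ℂ))
  have hint : (∫ θ : ℝ in (0)..2 * Real.pi, ‖f (circleMap c R θ)‖) ≤ 2 * Real.pi * M := by
    have hcont : Continuous fun θ : ℝ => ‖f (circleMap c R θ)‖ := by
      apply Continuous.norm
      apply hf.continuousOn.comp_continuous (continuous_circleMap c R)
      intro θ
      exact sphere_subset_closedBall (circleMap_mem_sphere c hR.le θ)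
    calc (∫ θ : ℝ in (0)..2 * Real.pi, ‖f (circleMap c R θ)‖)
        ≤ ∫ _ : ℝ in (0)..2 * Real.pi, M := by
          apply intervalIntegral.integral_mono_on Real.two_pi_pos.le
            (hcont.intervalIntegrable 0 (2 * Real.pi)) intervalIntegrable_const
          intro θ _
          exact hMf _ (circleMap_mem_sphere c hR.le θ)
      _ = 2 * Real.pi * M := by simp
  have hnorm := norm_cauchyPowerSeries_le f c R.toNNReal N
  rw [hR'] at hnorm hle hid ⊢
  have habs : |R| = R := abs_of_pos hR
  calc ‖(Nat.factorial N : ℂ) * (cauchyPowerSeries f c R N fun _ => 1)‖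
      = (Nat.factorial N : ℝ) * ‖cauchyPowerSeries f c R N fun _ => (1:ℂ)‖ := by
        simp [norm_mul]
    _ ≤ (Nat.factorial N : ℝ) * (((2 * Real.pi)⁻¹ * (2 * Real.pi * M)) * |R|⁻¹ ^ N) := by
        have h2 : ((2 * Real.pi)⁻¹ * ∫ θ : ℝ in (0)..2 * Real.pi, ‖f (circleMap c R θ)‖)
            * |R|⁻¹ ^ N ≤ ((2 * Real.pi)⁻¹ * (2 * Real.pi * M)) * |R|⁻¹ ^ N :=
          mul_le_mul_of_nonneg_right (mul_le_mul_of_nonneg_left hint (by positivity))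
            (by positivity)
        exact mul_le_mul_of_nonneg_left (hle.trans (hnorm.trans h2)) (by positivity)
    _ = (Nat.factorial N : ℝ) * M / R ^ N := by
        rw [habs]
        field_simp
        rw [one_div, inv_pow, inv_mul_cancel_right₀ (pow_ne_zero _ hR.ne')]

lemma one_add_cpow_ne_zero {δ c : ℝ} (hδ0 : 0 < δ) (hδ1 : δ < 1) (hc : 0 < c)
    {w : ℂ} (hw : w ≠ 0) : 1 + (c : ℂ) * w ^ (δ : ℂ) ≠ 0 := by
  intro h
  have h1 : w ^ (δ : ℂ) = ((-c⁻¹ : ℝ) : ℂ) := by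
    have hc' : (c : ℂ) ≠ 0 := by exact_mod_cast hc.ne'
    push_cast
    field_simp at h ⊢
    linear_combination h
  rw [Complex.cpow_def_of_ne_zero hw] at h1
  have him : (Complex.log w * (δ : ℂ)).im = δ * w.arg := by
    simp [Complex.mul_im, Complex.log_im]; ring
  have harg : -Real.pi < δ * w.arg ∧ δ * w.arg < Real.pi := by
    have h1' := Complex.abs_arg_le_pi w
    have hπ := Real.pi_pos
    constructor <;> nlinarith [abs_le.mp h1']
  have hsin : Real.sin (δ * w.arg) = 0 := by
    have := congrArg Complex.im h1
    rw [Complex.exp_im, him] at this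
    simp only [Complex.ofReal_im] at this
    have hexp := Real.exp_pos (Complex.log w * (δ : ℂ)).re
    exact by nlinarith [this, hexp]
  have hzero : δ * w.arg = 0 :=
    (Real.sin_eq_zero_iff_of_lt_of_lt harg.1 harg.2).mp hsin
  have := congrArg Complex.re h1
  rw [Complex.exp_re, him, hzero] at this
  simp only [Real.cos_zero, mul_one, Complex.ofReal_re] at this
  have hexp := Real.exp_pos (Complex.log w * (δ : ℂ)).re
  have : (0:ℝ) < -c⁻¹ := this ▸ hexp
  have : (0:ℝ) < c⁻¹ := by positivity
  linarith

lemma remainder_eq (α β C₁ C₂ : ℝ) (hα : 0 < α) (hαβ : α < β) (hβ : β ≤ 1)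
    (hC₁ : 0 < C₁) (hC₂ : 0 < C₂) (n : ℕ) {w : ℂ} (hw : w ≠ 0) :
    1 / ((C₁ : ℂ) * w ^ (α : ℂ) + (C₂ : ℂ) * w ^ (β : ℂ)) -
      (1 / (C₁ : ℂ)) * ∑ k ∈ Finset.range (n + 1),
        (-(C₂ : ℂ) / C₁) ^ k * w ^ ((-α + k * (β - α) : ℝ) : ℂ)
    = (1 / (C₁ : ℂ)) * (-(C₂ : ℂ) / C₁) ^ (n + 1) *
        w ^ ((-α + (n + 1 : ℕ) * (β - α) : ℝ) : ℂ) /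
        (1 + ((C₂ / C₁ : ℝ) : ℂ) * w ^ ((β - α : ℝ) : ℂ)) := by
  have hC₁' : (C₁ : ℂ) ≠ 0 := by exact_mod_cast hC₁.ne'
  set u := w ^ ((β - α : ℝ) : ℂ) with hu
  set D := 1 + ((C₂ / C₁ : ℝ) : ℂ) * u with hDdef
  have hD : D ≠ 0 :=
    one_add_cpow_ne_zero (by linarith) (by linarith) (div_pos hC₂ hC₁) hw
  set a := w ^ ((-α : ℝ) : ℂ) with ha
  set b := w ^ ((α : ℝ) : ℂ) with hb
  have hba : b * a = 1 := by
    rw [hb, ha, ← Complex.cpow_add _ _ hw]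
    norm_num
  have hbne : b ≠ 0 := left_ne_zero_of_mul_eq_one hba
  have hk : ∀ k : ℕ, w ^ ((-α + k * (β - α) : ℝ) : ℂ) = a * u ^ k := by
    intro k
    rw [ha, hu, ← Complex.cpow_nat_mul, ← Complex.cpow_add _ _ hw]
    norm_cast
  have hβeq : w ^ ((β : ℝ) : ℂ) = b * u := by
    rw [hb, hu, ← Complex.cpow_add _ _ hw]
    norm_num
  have hpow : (C₁ : ℂ) * w ^ (α : ℂ) + (C₂ : ℂ) * w ^ (β : ℂ) = C₁ * b * D := by
    rw [hβeq, hb, hDdef]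
    push_cast
    field_simp
  set q := (-(C₂ : ℂ) / C₁) * u with hq
  have hSsum : ∑ k ∈ Finset.range (n + 1),
      (-(C₂ : ℂ) / C₁) ^ k * w ^ ((-α + k * (β - α) : ℝ) : ℂ)
      = a * ∑ k ∈ Finset.range (n + 1), q ^ k := by
    rw [Finset.mul_sum]
    refine Finset.sum_congr rfl fun k _ => ?_
    rw [hk k, hq, mul_pow]
    ring
  set S := ∑ k ∈ Finset.range (n + 1), q ^ k with hS
  have hgeom : S * (q - 1) = q ^ (n + 1) - 1 := geom_sum_mul _ _
  have hq1 : q - 1 = -D := by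
    rw [hq, hDdef]
    push_cast
    field_simp
    ring
  have hSD : S * D = 1 - q ^ (n + 1) := by
    rw [hq1] at hgeom
    linear_combination -hgeom
  have e1 : (1 : ℂ) / ((C₁ : ℂ) * b * D) * D = a / C₁ := by
    rw [div_mul_eq_mul_div, one_mul,
      div_eq_div_iff (mul_ne_zero (mul_ne_zero hC₁' hbne) hD) hC₁']
    linear_combination -(C₁ : ℂ) * D * hba
  have key : (1 / ((C₁ : ℂ) * b * D) - 1 / (C₁ : ℂ) * (a * S)) * D
      = 1 / (C₁ : ℂ) * (-(C₂ : ℂ) / C₁) ^ (n + 1) * (a * u ^ (n + 1)) := by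
    calc (1 / ((C₁ : ℂ) * b * D) - 1 / (C₁ : ℂ) * (a * S)) * D
        = 1 / ((C₁ : ℂ) * b * D) * D - 1 / (C₁ : ℂ) * a * (S * D) := by ring
      _ = a / C₁ - 1 / (C₁ : ℂ) * a * (1 - q ^ (n + 1)) := by rw [e1, hSD]
      _ = 1 / (C₁ : ℂ) * a * q ^ (n + 1) := by ring
      _ = 1 / (C₁ : ℂ) * (-(C₂ : ℂ) / C₁) ^ (n + 1) * (a * u ^ (n + 1)) := by
          rw [hq, mul_pow]; ring
  rw [hpow, hSsum, hk (n + 1), eq_div_iff hD]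
  exact key

lemma phi_factor (α β C₁ C₂ : ℝ) (hαβ : α < β) {w : ℂ} (hw : w ≠ 0) :
    (C₁ : ℂ) * w ^ (α : ℂ) + (C₂ : ℂ) * w ^ (β : ℂ)
      = (C₁ : ℂ) * w ^ (α : ℂ) * (1 + ((C₂ / C₁ : ℝ) : ℂ) * w ^ ((β - α : ℝ) : ℂ)) ∨
    (C₁ : ℝ) = 0 := by
  rcases eq_or_ne C₁ 0 with h | h
  · exact Or.inr h
  left
  have hβeq : w ^ ((β : ℝ) : ℂ) = w ^ ((α : ℝ) : ℂ) * w ^ ((β - α : ℝ) : ℂ) := by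
    rw [← Complex.cpow_add _ _ hw]
    norm_num
  have hC₁' : (C₁ : ℂ) ≠ 0 := by exact_mod_cast h
  rw [hβeq]
  push_cast
  field_simp

lemma phi_ne_zero (α β C₁ C₂ : ℝ) (hα : 0 < α) (hαβ : α < β) (hβ : β ≤ 1)
    (hC₁ : 0 < C₁) (hC₂ : 0 < C₂) {w : ℂ} (hw : w ≠ 0) :
    (C₁ : ℂ) * w ^ (α : ℂ) + (C₂ : ℂ) * w ^ (β : ℂ) ≠ 0 := by
  rcases phi_factor α β C₁ C₂ hαβ hw with h | h
  · rw [h]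
    have hC₁' : (C₁ : ℂ) ≠ 0 := by exact_mod_cast hC₁.ne'
    have hcp : w ^ ((α : ℝ) : ℂ) ≠ 0 := by
      rw [Ne, Complex.cpow_eq_zero_iff]
      tauto
    exact mul_ne_zero (mul_ne_zero hC₁' hcp)
      (one_add_cpow_ne_zero (by linarith) (by linarith) (div_pos hC₂ hC₁) hw)
  · exact absurd h hC₁.ne'

set_option maxHeartbeats 1600000 in
/-- Asymptotic expansion at `0` (in the right half-plane) of the `N`-th derivative of the
remainder of `1/Φ`, `Φ(z) = C₁ z^α + C₂ z^β`, after removing the first `n+1` terms. -/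
theorem iteratedDeriv_remainder_bigO_zero (α β C₁ C₂ : ℝ)
    (hα : 0 < α) (hαβ : α < β) (hβ : β ≤ 1) (hC₁ : 0 < C₁) (hC₂ : 0 < C₂)
    (n : ℕ) (N : ℕ) (hN1 : 1 ≤ N) (hN : 1 + α - (n + 1) * (β - α) < (N : ℝ)) :
    (fun z : ℂ =>
        iteratedDeriv N
          (fun w : ℂ =>
            1 / ((C₁ : ℂ) * w ^ (α : ℂ) + (C₂ : ℂ) * w ^ (β : ℂ)) -
              (1 / (C₁ : ℂ)) * ∑ k ∈ Finset.range (n + 1),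
                (-(C₂ : ℂ) / C₁) ^ k * w ^ ((-α + k * (β - α) : ℝ) : ℂ)) z)
      =O[nhdsWithin 0 {z : ℂ | 0 < z.re}]
      (fun z : ℂ => ‖z‖ ^ (-(N : ℝ) - α + (n + 1) * (β - α))) := by
  have hδ0 : (0:ℝ) < β - α := by linarith
  have hδ1 : β - α < 1 := by linarith
  have hc : (0:ℝ) < C₂ / C₁ := div_pos hC₂ hC₁
  set γ : ℝ := -α + ((n : ℝ) + 1) * (β - α) with hγ
  set f : ℂ → ℂ := fun w =>
    1 / ((C₁ : ℂ) * w ^ (α : ℂ) + (C₂ : ℂ) * w ^ (β : ℂ)) -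
      (1 / (C₁ : ℂ)) * ∑ k ∈ Finset.range (n + 1),
        (-(C₂ : ℂ) / C₁) ^ k * w ^ ((-α + k * (β - α) : ℝ) : ℂ) with hf
  -- the closed form for f
  have hexp : ((-α + ((n + 1 : ℕ) : ℝ) * (β - α) : ℝ) : ℂ) = ((γ : ℝ) : ℂ) := by
    rw [hγ]
    push_cast
    ring_nf
  have hfg : ∀ w : ℂ, w ≠ 0 → f w =
      (1 / (C₁ : ℂ)) * (-(C₂ : ℂ) / C₁) ^ (n + 1) * w ^ ((γ : ℝ) : ℂ) /
        (1 + ((C₂ / C₁ : ℝ) : ℂ) * w ^ ((β - α : ℝ) : ℂ)) := by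
    intro w hw
    simp only [hf]
    rw [remainder_eq α β C₁ C₂ hα hαβ hβ hC₁ hC₂ n hw, hexp]
  -- choice of ε
  set ε : ℝ := min 1 ((1 / (2 * (C₂ / C₁))) ^ ((β - α)⁻¹ : ℝ)) with hε
  have hεpos : 0 < ε := lt_min one_pos (Real.rpow_pos_of_pos (by positivity) _)
  have hεb : ∀ t : ℝ, 0 ≤ t → t ≤ ε → (C₂ / C₁) * t ^ (β - α) ≤ 1 / 2 := by
    intro t ht htε
    have h1 : t ^ (β - α) ≤ ((1 / (2 * (C₂ / C₁))) ^ ((β - α)⁻¹ : ℝ)) ^ (β - α) :=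
      Real.rpow_le_rpow ht (htε.trans (min_le_right _ _)) hδ0.le
    rw [← Real.rpow_mul (by positivity), inv_mul_cancel₀ hδ0.ne', Real.rpow_one] at h1
    calc (C₂ / C₁) * t ^ (β - α) ≤ (C₂ / C₁) * (1 / (2 * (C₂ / C₁))) := by
          exact mul_le_mul_of_nonneg_left h1 hc.le
      _ = 1 / 2 := by field_simp
  -- pointwise norm bound
  set K : ℝ := 1 / C₁ * (C₂ / C₁) ^ (n + 1) * 2 with hK
  have hKpos : 0 < K := by positivity
  have hbound : ∀ w : ℂ, w ≠ 0 → ‖w‖ ≤ ε → ‖f w‖ ≤ K * ‖w‖ ^ γ := by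
    intro w hw hwε
    rw [hfg w hw]
    have hden : (1:ℝ) / 2 ≤ ‖1 + ((C₂ / C₁ : ℝ) : ℂ) * w ^ ((β - α : ℝ) : ℂ)‖ := by
      have hx : ‖((C₂ / C₁ : ℝ) : ℂ) * w ^ ((β - α : ℝ) : ℂ)‖ ≤ 1 / 2 := by
        rw [norm_mul, Complex.norm_real, Real.norm_eq_abs,
          Complex.norm_cpow_real, abs_of_pos hc]
        exact hεb ‖w‖ (norm_nonneg w) hwε
      have h2 : ‖(1:ℂ)‖ ≤ ‖1 + ((C₂ / C₁ : ℝ) : ℂ) * w ^ ((β - α : ℝ) : ℂ)‖ +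
          ‖((C₂ / C₁ : ℝ) : ℂ) * w ^ ((β - α : ℝ) : ℂ)‖ := by
        have := norm_add_le (1 + ((C₂ / C₁ : ℝ) : ℂ) * w ^ ((β - α : ℝ) : ℂ))
          (-(((C₂ / C₁ : ℝ) : ℂ) * w ^ ((β - α : ℝ) : ℂ)))
        simpa using this
      simp only [norm_one] at h2
      linarith
    rw [norm_div, norm_mul, norm_mul]
    have e1 : ‖(1 : ℂ) / (C₁ : ℂ)‖ = 1 / C₁ := by
      simp [abs_of_pos hC₁]
    have e2 : ‖(-(C₂ : ℂ) / C₁) ^ (n + 1)‖ = (C₂ / C₁) ^ (n + 1) := by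
      rw [norm_pow, norm_div, norm_neg]
      simp [abs_of_pos hC₁, abs_of_pos hC₂]
    have e3 : ‖w ^ ((γ : ℝ) : ℂ)‖ = ‖w‖ ^ γ := by
      rw [Complex.norm_cpow_real]
    rw [e1, e2, e3]
    calc 1 / C₁ * (C₂ / C₁) ^ (n + 1) * ‖w‖ ^ γ /
          ‖1 + ((C₂ / C₁ : ℝ) : ℂ) * w ^ ((β - α : ℝ) : ℂ)‖
        ≤ 1 / C₁ * (C₂ / C₁) ^ (n + 1) * ‖w‖ ^ γ / (1 / 2) := by
          gcongr
      _ = K * ‖w‖ ^ γ := by rw [hK]; ring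
  -- comparison of ‖w‖ ^ γ with ‖z‖ ^ γ
  set Mγ : ℝ := max ((1 / 2 : ℝ) ^ γ) ((3 / 2 : ℝ) ^ γ) with hMγ
  have hMγpos : 0 < Mγ := lt_max_of_lt_left (Real.rpow_pos_of_pos (by norm_num) _)
  have hcomp : ∀ z w : ℂ, z ≠ 0 → ‖z‖ / 2 ≤ ‖w‖ → ‖w‖ ≤ 3 / 2 * ‖z‖ →
      ‖w‖ ^ γ ≤ Mγ * ‖z‖ ^ γ := by
    intro z w hz h1 h2
    have hz0 : (0:ℝ) < ‖z‖ := norm_pos_iff.mpr hz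
    rcases le_or_gt 0 γ with hγ0 | hγ0
    · calc ‖w‖ ^ γ ≤ (3 / 2 * ‖z‖) ^ γ := Real.rpow_le_rpow (norm_nonneg w) h2 hγ0
        _ = (3 / 2 : ℝ) ^ γ * ‖z‖ ^ γ := Real.mul_rpow (by norm_num) (norm_nonneg z)
        _ ≤ Mγ * ‖z‖ ^ γ :=
            mul_le_mul_of_nonneg_right (le_max_right _ _)
              (Real.rpow_nonneg (norm_nonneg z) _)
    · calc ‖w‖ ^ γ ≤ (‖z‖ / 2) ^ γ :=
            Real.rpow_le_rpow_of_nonpos (by positivity) h1 hγ0.le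
        _ = (1 / 2 : ℝ) ^ γ * ‖z‖ ^ γ := by
            rw [div_eq_mul_inv, mul_comm, ← Real.mul_rpow (by norm_num) hz0.le]
            norm_num
        _ ≤ Mγ * ‖z‖ ^ γ :=
            mul_le_mul_of_nonneg_right (le_max_left _ _)
              (Real.rpow_nonneg (norm_nonneg z) _)
  -- the final constant
  set C : ℝ := (Nat.factorial N : ℝ) * (K * Mγ) * 2 ^ N with hC
  rw [Asymptotics.isBigO_iff]
  refine ⟨C, ?_⟩
  have hev : ∀ᶠ z : ℂ in nhdsWithin 0 {z : ℂ | 0 < z.re}, ‖z‖ < 2 * ε / 3 := by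
    have hmem : Metric.ball (0:ℂ) (2 * ε / 3) ∈ nhdsWithin 0 {z : ℂ | 0 < z.re} :=
      nhdsWithin_le_nhds (Metric.ball_mem_nhds _ (by positivity))
    filter_upwards [hmem] with z hz
    simpa [Metric.mem_ball, dist_zero_right] using hz
  filter_upwards [hev, self_mem_nhdsWithin] with z hzε hzs
  have hzre : 0 < z.re := hzs
  have hz0 : z ≠ 0 := by
    intro h
    rw [h] at hzre
    simp at hzre
  have hznorm : (0:ℝ) < ‖z‖ := norm_pos_iff.mpr hz0
  set r : ℝ := ‖z‖ / 2 with hr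
  have hrpos : 0 < r := by positivity
  -- properties of points in the closed ball
  have hball : ∀ w ∈ Metric.closedBall z r,
      w ∈ Complex.slitPlane ∧ w ≠ 0 ∧ ‖z‖ / 2 ≤ ‖w‖ ∧ ‖w‖ ≤ 3 / 2 * ‖z‖ ∧ ‖w‖ ≤ ε := by
    intro w hw
    rw [Metric.mem_closedBall, dist_eq_norm] at hw
    have hzw : ‖z - w‖ ≤ r := by rwa [norm_sub_rev]
    have hlow : ‖z‖ / 2 ≤ ‖w‖ := by
      have := norm_sub_norm_le z w
      linarith [hr]
    have hup : ‖w‖ ≤ 3 / 2 * ‖z‖ := by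
      have := norm_add_le (w - z) z
      simp only [sub_add_cancel] at this
      linarith
    have hw0 : w ≠ 0 := by
      intro h
      rw [h, norm_zero] at hlow
      linarith
    have hslit : w ∈ Complex.slitPlane := by
      by_contra hcon
      rw [Complex.mem_slitPlane_iff] at hcon
      push_neg at hcon
      obtain ⟨hre, him⟩ := hcon
      have hsq : ‖w - z‖ ^ 2 = (w.re - z.re) ^ 2 + (w.im - z.im) ^ 2 := by
        rw [Complex.sq_norm, Complex.normSq_apply]
        simp only [Complex.sub_re, Complex.sub_im]
        ring
      have hzsq : ‖z‖ ^ 2 = z.re ^ 2 + z.im ^ 2 := by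
        rw [Complex.sq_norm, Complex.normSq_apply]
        ring
      have h1 : ‖w - z‖ ^ 2 ≤ (‖z‖ / 2) ^ 2 := by
        have h1' : ‖w - z‖ ≤ ‖z‖ / 2 := le_trans hw (le_of_eq hr)
        exact pow_le_pow_left₀ (norm_nonneg _) h1' 2
      rw [him] at hsq
      nlinarith [hsq, hzsq, h1, mul_pos hzre hzre,
        mul_nonneg (neg_nonneg.mpr hre) (sub_nonneg.mpr (by linarith : w.re ≤ 2 * z.re))]
    have hwε : ‖w‖ ≤ ε := by linarith
    exact ⟨hslit, hw0, hlow, hup, hwε⟩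
  -- differentiability on the closed ball
  have hdiff : DifferentiableOn ℂ f (Metric.closedBall z r) := by
    intro w hw
    obtain ⟨hslit, hw0, -, -, -⟩ := hball w hw
    have hΦd : DifferentiableAt ℂ
        (fun w : ℂ => (C₁ : ℂ) * w ^ (α : ℂ) + (C₂ : ℂ) * w ^ (β : ℂ)) w := by
      apply DifferentiableAt.add <;>
        exact (((hasDerivAt_id w).cpow_const hslit).differentiableAt).const_mul _
    have hΦne := phi_ne_zero α β C₁ C₂ hα hαβ hβ hC₁ hC₂ hw0
    have hd : DifferentiableAt ℂ f w := by
      apply DifferentiableAt.sub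
      · exact (differentiableAt_const _).div hΦd hΦne
      · apply DifferentiableAt.const_mul
        apply DifferentiableAt.fun_sum
        intro k _
        exact (((hasDerivAt_id w).cpow_const hslit).differentiableAt).const_mul _
    exact hd.differentiableWithinAt
  -- sup bound on the sphere
  have hMf : ∀ w ∈ Metric.sphere z r, ‖f w‖ ≤ K * Mγ * ‖z‖ ^ γ := by
    intro w hw
    obtain ⟨-, hw0, hlow, hup, hwε⟩ := hball w (Metric.sphere_subset_closedBall hw)
    calc ‖f w‖ ≤ K * ‖w‖ ^ γ := hbound w hw0 hwε
      _ ≤ K * (Mγ * ‖z‖ ^ γ) := by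
          exact mul_le_mul_of_nonneg_left (hcomp z w hz0 hlow hup) hKpos.le
      _ = K * Mγ * ‖z‖ ^ γ := by ring
  have hcauchy := cauchy_est hrpos hdiff hMf N
  -- conclude
  have htarget : -(N : ℝ) - α + ((n : ℝ) + 1) * (β - α) = γ - N := by
    rw [hγ]; ring
  have hre : (Nat.factorial N : ℝ) * (K * Mγ * ‖z‖ ^ γ) / r ^ N = C * ‖z‖ ^ (γ - (N:ℝ)) := by
    rw [hC, hr, Real.rpow_sub hznorm, Real.rpow_natCast, div_pow]
    field_simp
  calc ‖iteratedDeriv N f z‖ ≤ (Nat.factorial N : ℝ) * (K * Mγ * ‖z‖ ^ γ) / r ^ N := hcauchy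
    _ = C * ‖z‖ ^ (γ - (N:ℝ)) := hre
    _ ≤ C * ‖‖z‖ ^ (-(N : ℝ) - α + ((n : ℝ) + 1) * (β - α))‖ := by
        rw [htarget, Real.norm_eq_abs, _root_.abs_of_nonneg (Real.rpow_nonneg hznorm.le _)]
end

section
/- Let 0 < α < β ≤ 1 and C₁, C₂ > 0, and set Φ(z) = C₁ z^α + C₂ z^β. Then for every n ∈ ℕ ∪ {0}, d/dz ( 1/Φ(z) ) = -(1/C₂) Σ_{k=0}^n (-C₁/C₂)^k (β + k(β-α)) z^{-1-β-k(β-α)} + O(|z|^{-1-β-(n+1)(β-α)}) as z → ∞ within the open right half-plane {Re z > 0}. -/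
open Complex Filter Asymptotics Bornology

noncomputable def aC (α β : ℝ) (k : ℕ) : ℂ := (-1)^k * ((β : ℂ) + k * ((β:ℂ) - α))

lemma aC_rec (α β : ℝ) (n : ℕ) :
    2 * aC α β (n+2) + aC α β (n+3) = -aC α β (n+1) := by
  simp only [aC]; push_cast; ring

lemma poly_id (α β : ℝ) (n : ℕ) (T : ℂ) :
    ((β:ℂ) + α * T) - (1+T)^2 * (∑ k ∈ Finset.range (n+1), aC α β k * T^k)
      = T^(n+1) * (aC α β (n+1) + (2*aC α β (n+1) + aC α β (n+2)) * T) := by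
  induction n with
  | zero => simp only [aC, Finset.sum_range_succ, Finset.sum_range_zero]; push_cast; ring
  | succ m ih =>
    rw [Finset.sum_range_succ]
    linear_combination ih - T^(m+3) * (aC_rec α β m)

/-- Asymptotic expansion at `∞` (in the right half-plane) of `d/dz (1/Φ)` for
`Φ(z) = C₁ z^α + C₂ z^β`:
`d/dz(1/Φ(z)) = -(1/C₂) Σ_{k=0}^n (-C₁/C₂)^k (β+k(β-α)) z^{-1-β-k(β-α)}
  + O(|z|^{-1-β-(n+1)(β-α)})`. -/
theorem deriv_inv_bigO_infty (α β C₁ C₂ : ℝ)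
    (hα : 0 < α) (hαβ : α < β) (hβ : β ≤ 1) (hC₁ : 0 < C₁) (hC₂ : 0 < C₂) (n : ℕ) :
    (fun z : ℂ =>
        deriv (fun w : ℂ => 1 / ((C₁ : ℂ) * w ^ (α : ℂ) + (C₂ : ℂ) * w ^ (β : ℂ))) z +
          (1 / (C₂ : ℂ)) * ∑ k ∈ Finset.range (n + 1),
            (-(C₁ : ℂ) / C₂) ^ k * ((β + k * (β - α) : ℝ) : ℂ) *
              z ^ ((-1 - β - k * (β - α) : ℝ) : ℂ))
      =O[cobounded ℂ ⊓ Filter.principal {z : ℂ | 0 < z.re}]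
      (fun z : ℂ => ‖z‖ ^ (-1 - β - (n + 1) * (β - α))) := by
  set l : Filter ℂ := cobounded ℂ ⊓ Filter.principal {z : ℂ | 0 < z.re} with hl
  have hC₂' : (C₂ : ℂ) ≠ 0 := by exact_mod_cast hC₂.ne'
  set A : ℂ := aC α β (n+1) with hA
  set B : ℂ := 2 * aC α β (n+1) + aC α β (n+2) with hB
  rw [isBigO_iff]
  refine ⟨(1/C₂) * (C₁/C₂)^(n+1) * (4 * (‖A‖ + ‖B‖)), ?_⟩
  have hre : ∀ᶠ z in l, 0 < z.re :=
    (Filter.eventually_principal.mpr (fun z hz => hz)).filter_mono inf_le_right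
  have hsmall : ∀ᶠ z in l, C₁/C₂ * ‖z‖ ^ (α - β) ≤ 1/2 := by
    have h1 : Tendsto (fun z : ℂ => ‖z‖) l atTop :=
      tendsto_norm_cobounded_atTop.mono_left inf_le_left
    have h2 : Tendsto (fun z : ℂ => C₁/C₂ * ‖z‖ ^ (α - β)) l (nhds (C₁/C₂ * 0)) := by
      refine Tendsto.const_mul _ ?_
      have := (tendsto_rpow_neg_atTop (y := β - α) (by linarith)).comp h1
      simpa [Function.comp_def, neg_sub] using this
    rw [mul_zero] at h2
    exact h2.eventually_le_const (by norm_num)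
  filter_upwards [hre, hsmall] with z hz hsm
  have hz0 : z ≠ 0 := fun h => by simp [h] at hz
  set w : ℂ := z ^ ((α - β : ℝ) : ℂ) with hwdef
  set T : ℂ := ((C₁:ℂ)/C₂) * w with hTdef
  have hwn : ‖w‖ = ‖z‖ ^ (α - β) := by
    rw [hwdef, Complex.norm_cpow_real]
  have hTnorm : ‖T‖ = C₁/C₂ * ‖z‖ ^ (α - β) := by
    rw [hTdef, norm_mul, hwn, norm_div, Complex.norm_real, Complex.norm_real,
      Real.norm_eq_abs, Real.norm_eq_abs, abs_of_pos hC₁, abs_of_pos hC₂]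
  have hT : ‖T‖ ≤ 1/2 := hTnorm ▸ hsm
  have h1T' : (1:ℝ)/2 ≤ ‖1 + T‖ := by
    have h := norm_add_le (1 + T) (-T)
    simp only [add_neg_cancel_right, norm_neg, norm_one] at h
    linarith
  have h1T : (1 : ℂ) + T ≠ 0 := by
    intro h; rw [h, norm_zero] at h1T'; linarith
  set zm : ℂ := z ^ ((-1 - β : ℝ) : ℂ) with hzm
  set zb : ℂ := z ^ ((β : ℝ) : ℂ) with hzb
  have hzb0 : zb ≠ 0 := by
    rw [hzb]; simp [Complex.cpow_eq_zero_iff, hz0]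
  -- factorization of Φ
  have hsplit : z ^ ((α : ℝ) : ℂ) = zb * w := by
    rw [hzb, hwdef, ← cpow_add _ _ hz0]; norm_num
  have hfac : (C₁ : ℂ) * z ^ ((α:ℝ):ℂ) + (C₂:ℂ) * z ^ ((β:ℝ):ℂ) = (C₂:ℂ) * zb * (1 + T) := by
    rw [hsplit, hzb, hTdef]; field_simp; ring
  have hΦ0 : (C₁ : ℂ) * z ^ ((α:ℝ):ℂ) + (C₂:ℂ) * z ^ ((β:ℝ):ℂ) ≠ 0 := by
    rw [hfac]; exact mul_ne_zero (mul_ne_zero hC₂' hzb0) h1T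
  -- derivative
  have hslit : z ∈ slitPlane := mem_slitPlane_iff.mpr (Or.inl hz)
  have hΦd : HasDerivAt (fun u : ℂ => (C₁ : ℂ) * u ^ ((α:ℝ):ℂ) + (C₂:ℂ) * u ^ ((β:ℝ):ℂ))
      ((C₁:ℂ) * (((α:ℝ):ℂ) * z ^ (((α:ℝ):ℂ) - 1)) + (C₂:ℂ) * (((β:ℝ):ℂ) * z ^ (((β:ℝ):ℂ) - 1))) z :=
    (((hasStrictDerivAt_cpow_const hslit).hasDerivAt).const_mul _).add
      (((hasStrictDerivAt_cpow_const hslit).hasDerivAt).const_mul _)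
  have hder : deriv (fun u : ℂ => 1 / ((C₁ : ℂ) * u ^ ((α:ℝ):ℂ) + (C₂:ℂ) * u ^ ((β:ℝ):ℂ))) z
      = (0 * ((C₁ : ℂ) * z ^ ((α:ℝ):ℂ) + (C₂:ℂ) * z ^ ((β:ℝ):ℂ))
          - 1 * ((C₁:ℂ) * (((α:ℝ):ℂ) * z ^ (((α:ℝ):ℂ) - 1)) + (C₂:ℂ) * (((β:ℝ):ℂ) * z ^ (((β:ℝ):ℂ) - 1))))
        / ((C₁ : ℂ) * z ^ ((α:ℝ):ℂ) + (C₂:ℂ) * z ^ ((β:ℝ):ℂ))^2 :=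
    ((hasDerivAt_const z (1:ℂ)).div hΦd hΦ0).deriv
  -- power identities
  have hA1 : z ^ (((α:ℝ):ℂ) - 1) = zm * zb * zb * w := by
    rw [show ((α:ℝ):ℂ) - 1 = ((-1 - β : ℝ):ℂ) + ((β:ℝ):ℂ) + ((β:ℝ):ℂ) + ((α - β:ℝ):ℂ) by
      push_cast; ring, cpow_add _ _ hz0, cpow_add _ _ hz0, cpow_add _ _ hz0]
  have hB1 : z ^ (((β:ℝ):ℂ) - 1) = zm * zb * zb := by
    rw [show ((β:ℝ):ℂ) - 1 = ((-1 - β : ℝ):ℂ) + ((β:ℝ):ℂ) + ((β:ℝ):ℂ) by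
      push_cast; ring, cpow_add _ _ hz0, cpow_add _ _ hz0]
  -- sum identity
  have hsum : ∑ k ∈ Finset.range (n + 1),
      (-(C₁ : ℂ) / C₂) ^ k * ((β + k * (β - α) : ℝ) : ℂ) * z ^ ((-1 - β - k * (β - α) : ℝ) : ℂ)
      = zm * ∑ k ∈ Finset.range (n+1), aC α β k * T ^ k := by
    rw [Finset.mul_sum]
    refine Finset.sum_congr rfl fun k _ => ?_
    have hk : z ^ ((-1 - β - k * (β - α) : ℝ) : ℂ) = zm * w ^ k := by
      rw [show ((-1 - β - k * (β - α) : ℝ):ℂ) = ((-1 - β : ℝ):ℂ) + (k : ℕ) * ((α - β:ℝ):ℂ) by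
        push_cast; ring, cpow_add _ _ hz0, cpow_nat_mul]
    rw [hk, hTdef]
    simp only [aC]
    push_cast
    ring
  -- exact error formula
  set S : ℂ := ∑ k ∈ Finset.range (n+1), aC α β k * T ^ k with hS
  have hpoly := poly_id α β n T
  rw [← hA, ← hB, ← hS] at hpoly
  have hCw : (C₁:ℂ) * w = (C₂:ℂ) * T := by
    rw [hTdef]; field_simp
  clear_value T
  have e1 : (0 * ((C₂:ℂ) * zb * (1+T)) - 1 * ((C₁:ℂ) * (((α:ℝ):ℂ) * (zm * zb * zb * w))
        + (C₂:ℂ) * (((β:ℝ):ℂ) * (zm * zb * zb)))) / ((C₂:ℂ) * zb * (1+T))^2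
      = -(zm * (((β:ℝ):ℂ) + ((α:ℝ):ℂ) * T)) / ((C₂:ℂ) * (1+T)^2) := by
    rw [div_eq_div_iff (pow_ne_zero 2 (mul_ne_zero (mul_ne_zero hC₂' hzb0) h1T))
      (mul_ne_zero hC₂' (pow_ne_zero 2 h1T))]
    linear_combination (-(zm * zb^2 * ((α:ℝ):ℂ) * (C₂:ℂ) * (1+T)^2)) * hCw
  have Eeq : deriv (fun u : ℂ => 1 / ((C₁ : ℂ) * u ^ ((α:ℝ):ℂ) + (C₂:ℂ) * u ^ ((β:ℝ):ℂ))) z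
      + (1 / (C₂:ℂ)) * (zm * S)
      = -(1/(C₂:ℂ)) * (zm * T^(n+1) * ((A + B * T)/(1+T)^2)) := by
    rw [hder, hfac, hA1, hB1, e1]
    rw [show ((β:ℝ):ℂ) + ((α:ℝ):ℂ) * T = (1+T)^2 * S + T^(n+1) * (A + B * T) by
      linear_combination hpoly]
    field_simp
    ring
  rw [hsum, Eeq]
  -- now the norm bound
  have hnz : (0:ℝ) < ‖z‖ := norm_pos_iff.mpr hz0
  have hzmn : ‖zm‖ = ‖z‖ ^ (-1 - β : ℝ) := by
    rw [hzm, Complex.norm_cpow_real]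
  have hABT : ‖A + B * T‖ ≤ ‖A‖ + ‖B‖ := by
    calc ‖A + B * T‖ ≤ ‖A‖ + ‖B‖ * ‖T‖ := by
          simpa [norm_mul] using norm_add_le A (B * T)
      _ ≤ ‖A‖ + ‖B‖ := by nlinarith [norm_nonneg B]
  have h1Tsq : (1:ℝ)/4 ≤ ‖(1+T)^2‖ := by
    rw [norm_pow]
    nlinarith [norm_nonneg (1+T)]
  have hdivle : ‖(A + B * T)/(1+T)^2‖ ≤ 4 * (‖A‖ + ‖B‖) := by
    rw [norm_div]
    rw [div_le_iff₀ (by linarith)]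
    nlinarith [norm_nonneg (A + B*T)]
  -- final
  have hTpow : ‖T^(n+1)‖ = (C₁/C₂ * ‖z‖ ^ (α - β))^(n+1) := by
    rw [norm_pow, hTnorm]
  have hnormeq : ‖z‖ ^ (-1-β : ℝ) * (C₁/C₂ * ‖z‖ ^ (α - β))^(n+1)
      = (C₁/C₂)^(n+1) * ‖z‖ ^ (-1 - β - (n + 1) * (β - α)) := by
    rw [mul_pow, ← Real.rpow_natCast (‖z‖ ^ (α - β)) (n+1), ← Real.rpow_mul hnz.le,
      ← mul_assoc, mul_comm (‖z‖ ^ (-1-β:ℝ)), mul_assoc, ← Real.rpow_add hnz]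
    push_cast
    ring_nf
  have hrpos : (0:ℝ) < ‖z‖ ^ (-1 - β - (n + 1) * (β - α)) := Real.rpow_pos_of_pos hnz _
  have hcn : ‖(1:ℂ)/(C₂:ℂ)‖ = 1/C₂ := by
    rw [norm_div, norm_one, Complex.norm_real, Real.norm_eq_abs, abs_of_pos hC₂]
  rw [norm_mul, norm_neg, norm_mul, norm_mul, hzmn, hTpow, hcn, Real.norm_eq_abs,
    abs_of_pos hrpos]
  calc 1/C₂ * (‖z‖ ^ (-1-β:ℝ) * (C₁/C₂ * ‖z‖ ^ (α-β))^(n+1) * ‖(A + B * T)/(1+T)^2‖)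
      ≤ 1/C₂ * (‖z‖ ^ (-1-β:ℝ) * (C₁/C₂ * ‖z‖ ^ (α-β))^(n+1) * (4 * (‖A‖ + ‖B‖))) := by
        exact mul_le_mul_of_nonneg_left
          (mul_le_mul_of_nonneg_left hdivle (by positivity)) (by positivity)
    _ = 1/C₂ * (C₁/C₂)^(n+1) * (4 * (‖A‖ + ‖B‖)) * ‖z‖ ^ (-1 - β - (n + 1) * (β - α)) := by
        rw [show ‖z‖ ^ (-1-β:ℝ) * (C₁/C₂ * ‖z‖ ^ (α-β))^(n+1) * (4 * (‖A‖ + ‖B‖))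
          = (‖z‖ ^ (-1-β:ℝ) * (C₁/C₂ * ‖z‖ ^ (α-β))^(n+1)) * (4 * (‖A‖ + ‖B‖)) by ring,
          hnormeq]
        ring
end

section
/- Let α ∈ (0,1), β ∈ (0,1], and set Φ(z) = z^β + log(1 + z^α) (principal branches). Then d/dz (1/Φ(z) - z^{-β}) = O(|z|^{-1-2β} log|z|) as z → ∞ within the open right half-plane {Re z > 0}. -/
open Complex Filter Asymptotics Bornology

lemma cpow_re_pos' {z : ℂ} {a : ℝ} (hz : 0 < z.re) (ha0 : 0 < a) (ha1 : a ≤ 1) :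
    0 < (z ^ (a:ℂ)).re := by
  have hz0 : z ≠ 0 := by intro h; simp [h] at hz
  rw [Complex.cpow_def_of_ne_zero hz0, Complex.exp_re]
  have him : (Complex.log z * (a:ℂ)).im = a * z.arg := by
    simp [Complex.log_im, mul_comm]
  have harg : |z.arg| < Real.pi / 2 := Complex.abs_arg_lt_pi_div_two_iff.2 (Or.inl hz)
  have : |a * z.arg| < Real.pi / 2 := by
    rw [abs_mul, abs_of_pos ha0]
    calc a * |z.arg| ≤ 1 * |z.arg| := by nlinarith [abs_nonneg z.arg]
    _ < Real.pi / 2 := by simpa using harg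
  have hcos : 0 < Real.cos ((a:ℝ) * z.arg) :=
    Real.cos_pos_of_mem_Ioo ⟨by linarith [abs_lt.1 this |>.1], abs_lt.1 this |>.2⟩
  rw [him]
  positivity

lemma mynorm_log_le (w : ℂ) : ‖Complex.log w‖ ≤ |Real.log ‖w‖| + Real.pi := by
  calc ‖Complex.log w‖ ≤ |(Complex.log w).re| + |(Complex.log w).im| :=
        Complex.norm_le_abs_re_add_abs_im _
    _ ≤ |Real.log ‖w‖| + Real.pi := by
        rw [Complex.log_re, Complex.log_im]
        exact add_le_add_right (Complex.abs_arg_le_pi w) _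

lemma myderiv_eq {α β : ℝ} (hα0 : 0 < α) (hα1 : α < 1) (hβ0 : 0 < β) {z : ℂ}
    (hz : 0 < z.re) (hΦ : z ^ (β:ℂ) + Complex.log (1 + z ^ (α:ℂ)) ≠ 0) :
    deriv (fun w : ℂ =>
      1 / (w ^ (β:ℂ) + Complex.log (1 + w ^ (α:ℂ))) - w ^ (-(β:ℂ))) z =
    ((β:ℂ) * (1 + z ^ (α:ℂ)) * Complex.log (1 + z ^ (α:ℂ)) *
        ((z ^ (β:ℂ) + Complex.log (1 + z ^ (α:ℂ))) + z ^ (β:ℂ))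
      - (α:ℂ) * (z ^ (α:ℂ)) * (z ^ (β:ℂ))) /
    (z * z ^ (β:ℂ) * (z ^ (β:ℂ) + Complex.log (1 + z ^ (α:ℂ))) ^ 2 * (1 + z ^ (α:ℂ))) := by
  have hz0 : z ≠ 0 := by intro h; simp [h] at hz
  have hsl : z ∈ Complex.slitPlane := Or.inl hz
  have hBre : 0 < (z ^ (α:ℂ)).re := cpow_re_pos' hz hα0 hα1.le
  have h1Bsl : (1 + z ^ (α:ℂ)) ∈ Complex.slitPlane := Or.inl (by simp; positivity)
  have h1B0 : (1 + z ^ (α:ℂ)) ≠ 0 := Complex.slitPlane_ne_zero h1Bsl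
  have hB : HasDerivAt (fun w : ℂ => 1 + w ^ (α:ℂ)) ((α:ℂ) * z ^ ((α:ℂ) - 1)) z :=
    ((Complex.hasStrictDerivAt_cpow_const hsl).hasDerivAt).const_add 1
  have hlog : HasDerivAt (fun w : ℂ => Complex.log (1 + w ^ (α:ℂ)))
      ((1 + z ^ (α:ℂ))⁻¹ * ((α:ℂ) * z ^ ((α:ℂ) - 1))) z :=
    by convert hB.clog h1Bsl using 1; show _ = _ / (1 + z ^ (α:ℂ)); ring
  have hA : HasDerivAt (fun w : ℂ => w ^ (β:ℂ)) ((β:ℂ) * z ^ ((β:ℂ) - 1)) z :=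
    (Complex.hasStrictDerivAt_cpow_const hsl).hasDerivAt
  have hΦ' : HasDerivAt (fun w : ℂ => w ^ (β:ℂ) + Complex.log (1 + w ^ (α:ℂ)))
      ((β:ℂ) * z ^ ((β:ℂ) - 1) + (1 + z ^ (α:ℂ))⁻¹ * ((α:ℂ) * z ^ ((α:ℂ) - 1))) z :=
    hA.add hlog
  have hinv := hΦ'.inv hΦ
  have hneg : HasDerivAt (fun w : ℂ => w ^ (-(β:ℂ))) ((-(β:ℂ)) * z ^ (-(β:ℂ) - 1)) z :=
    (Complex.hasStrictDerivAt_cpow_const hsl).hasDerivAt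
  have htot := hinv.sub hneg
  have : deriv (fun w : ℂ =>
      1 / (w ^ (β:ℂ) + Complex.log (1 + w ^ (α:ℂ))) - w ^ (-(β:ℂ))) z =
      -((β:ℂ) * z ^ ((β:ℂ) - 1) + (1 + z ^ (α:ℂ))⁻¹ * ((α:ℂ) * z ^ ((α:ℂ) - 1))) /
        (z ^ (β:ℂ) + Complex.log (1 + z ^ (α:ℂ))) ^ 2
      - (-(β:ℂ)) * z ^ (-(β:ℂ) - 1) := by
    refine HasDerivAt.deriv ?_
    convert htot using 1; funext w; simp only [one_div, Pi.sub_apply, Pi.inv_apply]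
  rw [this]
  have hsub1 : z ^ ((α:ℂ) - 1) = z ^ (α:ℂ) / z := by
    rw [Complex.cpow_sub _ _ hz0, Complex.cpow_one]
  have hsub2 : z ^ ((β:ℂ) - 1) = z ^ (β:ℂ) / z := by
    rw [Complex.cpow_sub _ _ hz0, Complex.cpow_one]
  have hsub3 : z ^ (-(β:ℂ) - 1) = (z ^ (β:ℂ))⁻¹ / z := by
    rw [Complex.cpow_sub _ _ hz0, Complex.cpow_one, Complex.cpow_neg]
  have hA0 : z ^ (β:ℂ) ≠ 0 := by
    intro h
    exact hz0 ((Complex.cpow_eq_zero_iff _ _).1 h).1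
  rw [hsub1, hsub2, hsub3]
  generalize hL : Complex.log (1 + z ^ (α:ℂ)) = L at *
  generalize hAg : z ^ (β:ℂ) = A at *
  generalize hBg : z ^ (α:ℂ) = B at *
  have hΦ2 : A + L ≠ 0 := hΦ
  clear hinv htot this hlog hΦ' hA hB hneg hL hAg hBg hsub1 hsub2 hsub3 h1Bsl hΦ
  obtain ⟨Φv, hΦv⟩ : ∃ w : ℂ, A + L = w := ⟨_, rfl⟩
  obtain ⟨Cv, hCv⟩ : ∃ w : ℂ, 1 + B = w := ⟨_, rfl⟩
  have hΦ0 : Φv ≠ 0 := hΦv ▸ hΦ2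
  have hC0 : Cv ≠ 0 := hCv ▸ h1B0
  have hLv : L = Φv - A := by rw [← hΦv]; ring
  have hBv : B = Cv - 1 := by rw [← hCv]; ring
  rw [hΦv, hCv, hLv, hBv]
  have hD : z * A * Φv ^ 2 * Cv ≠ 0 :=
    mul_ne_zero (mul_ne_zero (mul_ne_zero hz0 hA0) (pow_ne_zero 2 hΦ0)) hC0
  rw [eq_div_iff hD]
  field_simp
  ring

/-- For `Φ(z) = z^β + log(1+z^α)`, `d/dz (1/Φ(z) - z^{-β}) = O(|z|^{-1-2β} log|z|)`
as `z → ∞` in the open right half-plane. -/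
theorem deriv_inv_stable_plus_geometric_bigO (α β : ℝ)
    (hα0 : 0 < α) (hα1 : α < 1) (hβ0 : 0 < β) (hβ1 : β ≤ 1) :
    (fun z : ℂ =>
        deriv (fun w : ℂ =>
          1 / (w ^ (β : ℂ) + Complex.log (1 + w ^ (α : ℂ))) - w ^ (-(β : ℂ))) z)
      =O[cobounded ℂ ⊓ Filter.principal {z : ℂ | 0 < z.re}]
      (fun z : ℂ => ‖z‖ ^ (-1 - 2 * β) * Real.log ‖z‖) := by
  have hπ := Real.pi_pos
  have hlog2 : 0 < Real.log 2 := Real.log_pos (by norm_num)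
  obtain ⟨K, hKdef⟩ : ∃ K : ℝ, K = α + Real.log 2 + Real.pi := ⟨_, rfl⟩
  have hK : 0 < K := by rw [hKdef]; linarith
  obtain ⟨C, hCdef⟩ : ∃ C : ℝ, C = 8 * (6 * β * K + α) := ⟨_, rfl⟩
  rw [Asymptotics.isBigO_iff]
  refine ⟨C, ?_⟩
  have h3 : ∀ᶠ r : ℝ in atTop, K * Real.log r ≤ r ^ β / 2 := by
    have hc : (0:ℝ) < 1 / (2 * K) := by positivity
    filter_upwards [(isLittleO_log_rpow_atTop hβ0).def hc,
      eventually_ge_atTop (1:ℝ)] with r h1 h2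
    have hlr : 0 ≤ Real.log r := Real.log_nonneg h2
    have hrb : 0 ≤ r ^ β := Real.rpow_nonneg (by linarith) β
    rw [Real.norm_eq_abs, Real.norm_eq_abs, _root_.abs_of_nonneg hlr, _root_.abs_of_nonneg hrb] at h1
    calc K * Real.log r ≤ K * (1 / (2*K) * r ^ β) :=
          mul_le_mul_of_nonneg_left h1 hK.le
      _ = r ^ β / 2 := by field_simp
  have hEr : ∀ᶠ r : ℝ in atTop,
      Real.exp 1 ≤ r ∧ 2 ≤ r ^ α ∧ K * Real.log r ≤ r ^ β / 2 := by
    filter_upwards [eventually_ge_atTop (Real.exp 1),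
      (tendsto_rpow_atTop hα0).eventually_ge_atTop 2, h3] with r h1 h2 h3
    exact ⟨h1, h2, h3⟩
  have hcb : ∀ᶠ z : ℂ in cobounded ℂ ⊓ Filter.principal {z : ℂ | 0 < z.re},
      Real.exp 1 ≤ ‖z‖ ∧ 2 ≤ ‖z‖ ^ α ∧ K * Real.log ‖z‖ ≤ ‖z‖ ^ β / 2 :=
    (tendsto_norm_cobounded_atTop.eventually hEr).filter_mono inf_le_left
  have hrefil : ∀ᶠ z : ℂ in cobounded ℂ ⊓ Filter.principal {z : ℂ | 0 < z.re},
      0 < z.re :=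
    (Filter.eventually_principal.2 fun z hz => hz).filter_mono inf_le_right
  filter_upwards [hcb, hrefil] with z hz hzre
  obtain ⟨he, h2a, hKb⟩ := hz
  have hr1 : 1 ≤ ‖z‖ := le_trans (by nlinarith [Real.add_one_le_exp (1:ℝ)]) he
  have hrpos : (0:ℝ) < ‖z‖ := lt_of_lt_of_le one_pos hr1
  have hlog1 : 1 ≤ Real.log ‖z‖ := (Real.le_log_iff_exp_le hrpos).2 he
  have hlognn : 0 ≤ Real.log ‖z‖ := by linarith
  have hz0 : z ≠ 0 := by intro h; simp [h] at hzre
  have nA : ‖z ^ (β:ℂ)‖ = ‖z‖ ^ β := by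
    rw [Complex.norm_cpow_real]
  have nB : ‖z ^ (α:ℂ)‖ = ‖z‖ ^ α := by
    rw [Complex.norm_cpow_real]
  have rApos : (0:ℝ) < ‖z‖ ^ β := Real.rpow_pos_of_pos hrpos β
  have rBpos : (0:ℝ) < ‖z‖ ^ α := Real.rpow_pos_of_pos hrpos α
  have hBre : 0 < (z ^ (α:ℂ)).re := cpow_re_pos' hzre hα0 hα1.le
  have h1Bre : 1 ≤ (1 + z ^ (α:ℂ)).re := by
    rw [Complex.add_re, Complex.one_re]; linarith
  have n1Bge1 : 1 ≤ ‖1 + z ^ (α:ℂ)‖ := by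
    calc (1:ℝ) ≤ (1 + z ^ (α:ℂ)).re := h1Bre
    _ ≤ ‖1 + z ^ (α:ℂ)‖ := by exact Complex.re_le_norm _
  have n1Blow : ‖z‖ ^ α / 2 ≤ ‖1 + z ^ (α:ℂ)‖ := by
    have h := norm_sub_le (1 + z ^ (α:ℂ)) 1
    simp only [add_sub_cancel_left, norm_one] at h
    rw [nB] at h
    linarith
  have n1Bup : ‖1 + z ^ (α:ℂ)‖ ≤ 2 * ‖z‖ ^ α := by
    calc ‖1 + z ^ (α:ℂ)‖ ≤ ‖(1:ℂ)‖ + ‖z ^ (α:ℂ)‖ := norm_add_le _ _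
    _ = 1 + ‖z‖ ^ α := by rw [nB, norm_one]
    _ ≤ 2 * ‖z‖ ^ α := by linarith
  have nL : ‖Complex.log (1 + z ^ (α:ℂ))‖ ≤ K * Real.log ‖z‖ := by
    have hlogpos : 0 ≤ Real.log ‖1 + z ^ (α:ℂ)‖ := Real.log_nonneg n1Bge1
    calc ‖Complex.log (1 + z ^ (α:ℂ))‖
        ≤ |Real.log ‖1 + z ^ (α:ℂ)‖| + Real.pi := mynorm_log_le _
    _ = Real.log ‖1 + z ^ (α:ℂ)‖ + Real.pi := by
        rw [_root_.abs_of_nonneg hlogpos]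
    _ ≤ Real.log (2 * ‖z‖ ^ α) + Real.pi := by
        have : Real.log ‖1 + z ^ (α:ℂ)‖ ≤ Real.log (2 * ‖z‖ ^ α) :=
          Real.log_le_log (by linarith) n1Bup
        linarith
    _ = Real.log 2 + α * Real.log ‖z‖ + Real.pi := by
        rw [Real.log_mul (by norm_num) rBpos.ne', Real.log_rpow hrpos]
    _ ≤ K * Real.log ‖z‖ := by rw [hKdef]; nlinarith
  have nΦlow : ‖z‖ ^ β / 2 ≤ ‖z ^ (β:ℂ) + Complex.log (1 + z ^ (α:ℂ))‖ := by
    have h := norm_sub_le (z ^ (β:ℂ) + Complex.log (1 + z ^ (α:ℂ)))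
      (Complex.log (1 + z ^ (α:ℂ)))
    simp only [add_sub_cancel_right] at h
    rw [nA] at h
    linarith
  have hΦ0 : z ^ (β:ℂ) + Complex.log (1 + z ^ (α:ℂ)) ≠ 0 := by
    intro h; rw [h, norm_zero] at nΦlow; nlinarith
  have nΦup : ‖z ^ (β:ℂ) + Complex.log (1 + z ^ (α:ℂ))‖ ≤ ‖z‖ ^ β + K * Real.log ‖z‖ := by
    calc ‖z ^ (β:ℂ) + Complex.log (1 + z ^ (α:ℂ))‖
        ≤ ‖z ^ (β:ℂ)‖ + ‖Complex.log (1 + z ^ (α:ℂ))‖ := norm_add_le _ _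
    _ ≤ ‖z‖ ^ β + K * Real.log ‖z‖ := by rw [nA]; linarith
  have nΦA : ‖(z ^ (β:ℂ) + Complex.log (1 + z ^ (α:ℂ))) + z ^ (β:ℂ)‖ ≤ 3 * ‖z‖ ^ β := by
    calc ‖(z ^ (β:ℂ) + Complex.log (1 + z ^ (α:ℂ))) + z ^ (β:ℂ)‖
        ≤ ‖z ^ (β:ℂ) + Complex.log (1 + z ^ (α:ℂ))‖ + ‖z ^ (β:ℂ)‖ := norm_add_le _ _
    _ ≤ 3 * ‖z‖ ^ β := by rw [nA]; linarith
  rw [myderiv_eq hα0 hα1 hβ0 hzre hΦ0, norm_div]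
  have hab : ‖z‖ ^ (α + β) = ‖z‖ ^ α * ‖z‖ ^ β := Real.rpow_add hrpos α β
  have hnum : ‖(β:ℂ) * (1 + z ^ (α:ℂ)) * Complex.log (1 + z ^ (α:ℂ)) *
        ((z ^ (β:ℂ) + Complex.log (1 + z ^ (α:ℂ))) + z ^ (β:ℂ))
      - (α:ℂ) * (z ^ (α:ℂ)) * (z ^ (β:ℂ))‖
      ≤ (6 * β * K + α) * (‖z‖ ^ (α + β) * Real.log ‖z‖) := by
    calc ‖(β:ℂ) * (1 + z ^ (α:ℂ)) * Complex.log (1 + z ^ (α:ℂ)) *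
        ((z ^ (β:ℂ) + Complex.log (1 + z ^ (α:ℂ))) + z ^ (β:ℂ))
      - (α:ℂ) * (z ^ (α:ℂ)) * (z ^ (β:ℂ))‖
        ≤ ‖(β:ℂ) * (1 + z ^ (α:ℂ)) * Complex.log (1 + z ^ (α:ℂ)) *
        ((z ^ (β:ℂ) + Complex.log (1 + z ^ (α:ℂ))) + z ^ (β:ℂ))‖
          + ‖(α:ℂ) * (z ^ (α:ℂ)) * (z ^ (β:ℂ))‖ := norm_sub_le _ _
    _ = β * ‖1 + z ^ (α:ℂ)‖ * ‖Complex.log (1 + z ^ (α:ℂ))‖ *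
          ‖(z ^ (β:ℂ) + Complex.log (1 + z ^ (α:ℂ))) + z ^ (β:ℂ)‖
        + α * ‖z ^ (α:ℂ)‖ * ‖z ^ (β:ℂ)‖ := by
        simp only [norm_mul, Complex.norm_real, Real.norm_eq_abs,
          abs_of_pos hβ0, abs_of_pos hα0]
    _ ≤ β * (2 * ‖z‖ ^ α) * (K * Real.log ‖z‖) * (3 * ‖z‖ ^ β)
        + α * (‖z‖ ^ α) * (‖z‖ ^ β) := by
        rw [nA, nB]
        gcongr
    _ ≤ (6 * β * K + α) * (‖z‖ ^ (α + β) * Real.log ‖z‖) := by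
        rw [hab]
        nlinarith [mul_nonneg rBpos.le rApos.le,
          mul_nonneg (mul_nonneg hα0.le (mul_nonneg rBpos.le rApos.le))
            (sub_nonneg.2 hlog1)]
  have hden : ‖z‖ * ‖z‖ ^ β * (‖z‖ ^ β / 2) ^ 2 * (‖z‖ ^ α / 2)
      ≤ ‖z * z ^ (β:ℂ) * (z ^ (β:ℂ) + Complex.log (1 + z ^ (α:ℂ))) ^ 2
        * (1 + z ^ (α:ℂ))‖ := by
    rw [norm_mul, norm_mul, norm_mul, norm_pow, nA]
    gcongr
  calc ‖(β:ℂ) * (1 + z ^ (α:ℂ)) * Complex.log (1 + z ^ (α:ℂ)) *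
        ((z ^ (β:ℂ) + Complex.log (1 + z ^ (α:ℂ))) + z ^ (β:ℂ))
      - (α:ℂ) * (z ^ (α:ℂ)) * (z ^ (β:ℂ))‖ /
      ‖z * z ^ (β:ℂ) * (z ^ (β:ℂ) + Complex.log (1 + z ^ (α:ℂ))) ^ 2 * (1 + z ^ (α:ℂ))‖
      ≤ ((6 * β * K + α) * (‖z‖ ^ (α + β) * Real.log ‖z‖)) /
        (‖z‖ * ‖z‖ ^ β * (‖z‖ ^ β / 2) ^ 2 * (‖z‖ ^ α / 2)) :=
      div_le_div₀ (by positivity) hnum (by positivity) hden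
  _ = C * (‖z‖ ^ (-1 - 2*β) * Real.log ‖z‖) := by
      rw [hCdef, show (-1 - 2*β) = (α + β) - (1 + α + 3*β) by ring,
        Real.rpow_sub hrpos]
      have h1 : ‖z‖ * ‖z‖ ^ β * (‖z‖ ^ β / 2) ^ 2 * (‖z‖ ^ α / 2)
          = ‖z‖ ^ (1 + α + 3*β) / 8 := by
        rw [show (1 + α + 3*β) = 1 + α + β + β + β by ring, Real.rpow_add hrpos,
          Real.rpow_add hrpos, Real.rpow_add hrpos, Real.rpow_add hrpos,
          Real.rpow_one]
        ring
      rw [h1]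
      have hne : ‖z‖ ^ (1 + α + 3*β) ≠ 0 := (Real.rpow_pos_of_pos hrpos _).ne'
      field_simp
  _ ≤ C * ‖‖z‖ ^ (-1 - 2*β) * Real.log ‖z‖‖ := by
      rw [Real.norm_eq_abs]
      exact mul_le_mul_of_nonneg_left (le_abs_self _) (by rw [hCdef]; positivity)
end

section
/- Let 0 < α ≤ 1 and let b₋₁, b₀, b₁, … be the Laurent coefficients of 1/log(1+w) at w = 0. Fix n ∈ ℕ ∪ {0} and N ∈ ℕ with N > 1 + nα. Then (d/dz)^N ( 1/log(1+z^α) - Σ_{k=-1}^{n-1} b_k z^{kα} ) = O(|z|^{-N+nα}) as z → 0 within the open right half-plane {Re z > 0}. -/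
open Complex Filter Asymptotics


open Complex Filter Asymptotics

lemma cauchy_estimate {f : ℂ → ℂ} {c : ℂ} {R : NNReal} {M : ℝ} (hR : 0 < R)
    (hf : DifferentiableOn ℂ f (Metric.closedBall c R))
    (hbd : ∀ w ∈ Metric.closedBall c (R : ℝ), ‖f w‖ ≤ M) (N : ℕ) :
    ‖iteratedDeriv N f c‖ ≤ ((Nat.factorial N) : ℝ) * M * (R : ℝ)⁻¹ ^ N := by
  have hR' : (0 : ℝ) < R := hR
  have h := hf.hasFPowerSeriesOnBall hR
  have key := h.factorial_smul (y := (1 : ℂ)) N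
  have hM : 0 ≤ M := le_trans (norm_nonneg _) (hbd c (Metric.mem_closedBall_self hR'.le))
  rw [iteratedDeriv_eq_iteratedFDeriv, ← key]
  have h1 : ‖((Nat.factorial N) • cauchyPowerSeries f c R N fun _ ↦ (1:ℂ))‖
      = ((Nat.factorial N) : ℝ) * ‖cauchyPowerSeries f c R N fun _ ↦ (1:ℂ)‖ := by
    rw [← Nat.cast_smul_eq_nsmul ℝ, norm_smul]
    simp
  rw [h1]
  have h2 : ‖cauchyPowerSeries f c R N fun _ ↦ (1:ℂ)‖ ≤ ‖cauchyPowerSeries f c R N‖ := by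
    simpa using (cauchyPowerSeries f c R N).le_opNorm (fun _ ↦ (1:ℂ))
  have h3 := norm_cauchyPowerSeries_le f c R N
  have hcont : Continuous fun θ : ℝ => ‖f (circleMap c R θ)‖ := by
    refine (hf.continuousOn.comp_continuous (continuous_circleMap c R) ?_).norm
    intro θ
    exact Metric.sphere_subset_closedBall (circleMap_mem_sphere c hR'.le θ)
  have h4 : (∫ θ : ℝ in (0)..2 * Real.pi, ‖f (circleMap c R θ)‖) ≤ 2 * Real.pi * M := by
    have := intervalIntegral.integral_mono_on (a := 0) (b := 2 * Real.pi)
      (f := fun θ : ℝ => ‖f (circleMap c R θ)‖) (g := fun _ : ℝ => M)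
      Real.two_pi_pos.le (hcont.intervalIntegrable (μ := MeasureTheory.volume) _ _) ((intervalIntegrable_const))
      (fun θ _ => hbd _ (Metric.sphere_subset_closedBall (circleMap_mem_sphere c hR'.le θ)))
    simpa using this
  have h5 : (2 * Real.pi)⁻¹ * ∫ θ : ℝ in (0)..2 * Real.pi, ‖f (circleMap c R θ)‖ ≤ M := by
    rw [inv_mul_le_iff₀ Real.two_pi_pos]
    linarith [h4]
  calc ((Nat.factorial N) : ℝ) * ‖cauchyPowerSeries f c R N fun _ ↦ (1:ℂ)‖
      ≤ ((Nat.factorial N) : ℝ) * ‖cauchyPowerSeries f c R N‖ := by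
        exact mul_le_mul_of_nonneg_left h2 (by positivity)
    _ ≤ ((Nat.factorial N) : ℝ) * (((2 * Real.pi)⁻¹ * ∫ θ : ℝ in (0)..2 * Real.pi, ‖f (circleMap c R θ)‖) *
          |(R : ℝ)|⁻¹ ^ N) := mul_le_mul_of_nonneg_left h3 (by positivity)
    _ ≤ ((Nat.factorial N) : ℝ) * M * (R : ℝ)⁻¹ ^ N := by
        rw [_root_.abs_of_nonneg hR'.le]
        have h6 := mul_le_mul_of_nonneg_left
          (mul_le_mul_of_nonneg_right h5 (pow_nonneg (inv_nonneg.2 hR'.le) N))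
          (Nat.cast_nonneg (α := ℝ) (Nat.factorial N))
        linarith [h6]
lemma tail_bound (b : ℕ → ℂ) (n : ℕ)
    (hb : ∀ w : ℂ, w ≠ 0 → ‖w‖ < 1 →
      HasSum (fun j : ℕ => b j * w ^ ((j : ℤ) - 1)) (1 / Complex.log (1 + w))) :
    ∃ C : ℝ, 0 ≤ C ∧ ∀ w : ℂ, w ≠ 0 → ‖w‖ ≤ 1/2 →
      ‖1 / Complex.log (1 + w) - ∑ j ∈ Finset.range (n + 1), b j * w ^ ((j : ℤ) - 1)‖
        ≤ C * ‖w‖ ^ n := by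
  have hhalf := hb (1/2) (by norm_num) (by norm_num)
  have hsum : Summable fun j => ‖b j * (1/2 : ℂ) ^ ((j : ℤ) - 1)‖ :=
    summable_norm_iff.mpr hhalf.summable
  set u : ℕ → ℝ := fun j => ‖b j * (1/2 : ℂ) ^ ((j : ℤ) - 1)‖ with hu_def
  have hu : Summable fun k => u (k + (n + 1)) := (summable_nat_add_iff (n + 1)).mpr hsum
  have hunonneg : ∀ k, 0 ≤ u k := fun k => norm_nonneg _
  refine ⟨2 ^ n * ∑' k, u (k + (n + 1)),
    mul_nonneg (by positivity) (tsum_nonneg fun k => hunonneg _), ?_⟩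
  intro w hw hw2
  have h := hb w hw (lt_of_le_of_lt hw2 (by norm_num))
  have htail := (hasSum_nat_add_iff' (n + 1)).mpr h
  set v : ℕ → ℂ := fun m => b (m + (n + 1)) * w ^ (((m + (n + 1) : ℕ) : ℤ) - 1) with hv_def
  have hzpow : ∀ (x : ℂ) (m : ℕ), x ^ (((m + (n + 1) : ℕ) : ℤ) - 1) = x ^ (m + n) := by
    intro x m
    have : ((m + (n + 1) : ℕ) : ℤ) - 1 = ((m + n : ℕ) : ℤ) := by push_cast; ring
    rw [this, zpow_natCast]
  have key : ∀ m : ℕ, ‖v m‖ ≤ ‖w‖ ^ n * (2 ^ n * u (m + (n + 1))) := by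
    intro m
    rw [hv_def]
    simp only [hu_def]
    rw [norm_mul, norm_mul, hzpow, hzpow, norm_pow, norm_pow]
    have h12 : ‖(1/2 : ℂ)‖ = 1/2 := by norm_num
    rw [h12]
    have hwn : ‖w‖ ^ (m + n) ≤ (1/2) ^ m * ‖w‖ ^ n := by
      rw [pow_add]
      exact mul_le_mul_of_nonneg_right (pow_le_pow_left₀ (norm_nonneg w) hw2 m)
        (pow_nonneg (norm_nonneg w) n)
    calc ‖b (m + (n + 1))‖ * ‖w‖ ^ (m + n)
        ≤ ‖b (m + (n + 1))‖ * ((1/2) ^ m * ‖w‖ ^ n) :=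
          mul_le_mul_of_nonneg_left hwn (norm_nonneg _)
      _ = ‖w‖ ^ n * (2 ^ n * (‖b (m + (n + 1))‖ * (1/2) ^ (m + n))) := by
          have h2 : (2:ℝ) ^ n * (1/2:ℝ) ^ n = 1 := by
            rw [← mul_pow]; norm_num
          rw [pow_add]
          calc ‖b (m + (n + 1))‖ * ((1/2) ^ m * ‖w‖ ^ n)
              = ‖w‖ ^ n * (((2:ℝ) ^ n * (1/2:ℝ) ^ n) *
                  (‖b (m + (n + 1))‖ * (1/2) ^ m)) := by rw [h2]; ring
            _ = ‖w‖ ^ n * (2 ^ n * (‖b (m + (n + 1))‖ * ((1/2) ^ m * (1/2) ^ n))) := by ring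
  have hsummajor : Summable fun m => ‖w‖ ^ n * (2 ^ n * u (m + (n + 1))) :=
    ((hu.mul_left _).mul_left _)
  have hvnorm : Summable fun m => ‖v m‖ :=
    Summable.of_nonneg_of_le (fun _ => norm_nonneg _) key hsummajor
  calc ‖1 / Complex.log (1 + w) - ∑ j ∈ Finset.range (n + 1), b j * w ^ ((j : ℤ) - 1)‖
      = ‖∑' m, v m‖ := by rw [htail.tsum_eq]
    _ ≤ ∑' m, ‖v m‖ := norm_tsum_le_tsum_norm hvnorm
    _ ≤ ∑' m, ‖w‖ ^ n * (2 ^ n * u (m + (n + 1))) := Summable.tsum_le_tsum key hvnorm hsummajor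
    _ = 2 ^ n * (∑' m, u (m + (n + 1))) * ‖w‖ ^ n := by
        rw [tsum_mul_left, tsum_mul_left]; ring

/-- Asymptotic expansion at `0` (right half-plane) of derivatives of
`1/log(1+z^α)` minus its Laurent-type expansion. Here `b j` denotes the Laurent
coefficient `b_{j-1}` of `1/log(1+w)` at `w = 0`, i.e.
`1/log(1+w) = Σ_{j≥0} b j · w^{j-1}` on `0 < |w| < 1`. -/
theorem iteratedDeriv_inv_log_geometric_bigO_zero (α : ℝ) (hα0 : 0 < α) (hα1 : α ≤ 1)
    (b : ℕ → ℂ)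
    (hb : ∀ w : ℂ, w ≠ 0 → ‖w‖ < 1 →
      HasSum (fun j : ℕ => b j * w ^ ((j : ℤ) - 1)) (1 / Complex.log (1 + w)))
    (n : ℕ) (N : ℕ) (hN : 1 + (n : ℝ) * α < (N : ℝ)) :
    (fun z : ℂ =>
        iteratedDeriv N
          (fun w : ℂ =>
            1 / Complex.log (1 + w ^ (α : ℂ)) -
              ∑ j ∈ Finset.range (n + 1), b j * w ^ ((((j : ℝ) - 1) * α : ℝ) : ℂ)) z)
      =O[nhdsWithin 0 {z : ℂ | 0 < z.re}]
      (fun z : ℂ => ‖z‖ ^ (-(N : ℝ) + (n : ℝ) * α)) := by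
  obtain ⟨C, hC0, hC⟩ := tail_bound b n hb
  set F : ℂ → ℂ := fun w : ℂ =>
    1 / Complex.log (1 + w ^ (α : ℂ)) -
      ∑ j ∈ Finset.range (n + 1), b j * w ^ ((((j : ℝ) - 1) * α : ℝ) : ℂ) with hF
  have hFeq : ∀ ζ : ℂ, F ζ = 1 / Complex.log (1 + ζ ^ (α : ℂ)) -
      ∑ j ∈ Finset.range (n + 1), b j * (ζ ^ (α : ℂ)) ^ ((j : ℤ) - 1) := by
    intro ζ
    simp only [hF]
    congr 1
    apply Finset.sum_congr rfl
    intro j _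
    have hcast : ((((j : ℝ) - 1) * α : ℝ) : ℂ) = (((j : ℤ) - 1 : ℤ) : ℂ) * (α : ℂ) := by
      push_cast; ring
    rw [hcast, Complex.cpow_int_mul]
  have habs : ∀ ζ : ℂ, ‖ζ ^ (α : ℂ)‖ = ‖ζ‖ ^ α := by
    intro ζ
    rw [Complex.norm_cpow_real]
  have hhalf : (0:ℝ) < (1/2 : ℝ) ^ (α⁻¹) := Real.rpow_pos_of_pos (by norm_num) _
  set δ : ℝ := min ((2/3) * (1/2 : ℝ) ^ (α⁻¹)) 1 with hδ
  have hδ0 : 0 < δ := lt_min (by positivity) one_pos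
  set K : ℝ := (Nat.factorial N : ℝ) * (C * (3/2 : ℝ) ^ (α * (n:ℝ))) * 2 ^ N with hK
  rw [isBigO_iff]
  refine ⟨K, ?_⟩
  have hball : Metric.ball (0:ℂ) δ ∈ nhdsWithin (0:ℂ) {z : ℂ | 0 < z.re} :=
    nhdsWithin_le_nhds (Metric.ball_mem_nhds 0 hδ0)
  filter_upwards [hball, self_mem_nhdsWithin] with z hzδ hzre
  rw [Metric.mem_ball, dist_zero_right] at hzδ
  have hzre' : 0 < z.re := hzre
  have hz0 : z ≠ 0 := by
    intro h
    rw [h] at hzre'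
    simp at hzre'
  have hznorm : 0 < ‖z‖ := norm_pos_iff.mpr hz0
  set r : NNReal := ⟨‖z‖/2, by positivity⟩ with hr
  have hrcoe : (r : ℝ) = ‖z‖/2 := rfl
  have hrpos : 0 < r := by
    refine NNReal.coe_pos.mp ?_
    rw [hrcoe]; positivity
  -- points of the closed ball lie in the slit plane, are nonzero, and have controlled norm
  have hmem : ∀ ζ ∈ Metric.closedBall z (r:ℝ), ζ ∈ Complex.slitPlane := by
    intro ζ hζ
    rw [Metric.mem_closedBall, dist_eq_norm, hrcoe] at hζ
    by_contra hcon
    rw [Complex.mem_slitPlane_iff] at hcon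
    push_neg at hcon
    obtain ⟨h1, h2⟩ := hcon
    have hsq : ‖ζ - z‖^2 = (ζ.re - z.re)^2 + (ζ.im - z.im)^2 := by
      rw [Complex.sq_norm, Complex.normSq_apply]
      simp [Complex.sub_re, Complex.sub_im]
      ring
    have hsqz : ‖z‖^2 = z.re^2 + z.im^2 := by
      rw [Complex.sq_norm, Complex.normSq_apply]; ring
    have hge : ‖z‖^2 ≤ ‖ζ - z‖^2 := by
      rw [hsq, hsqz, h2]
      nlinarith [mul_nonneg (neg_nonneg.2 h1) hzre'.le, sq_nonneg ζ.re]
    have hle : ‖ζ - z‖^2 ≤ (‖z‖/2)^2 :=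
      pow_le_pow_left₀ (norm_nonneg _) hζ 2
    nlinarith [hznorm]
  have hne : ∀ ζ ∈ Metric.closedBall z (r:ℝ), ζ ≠ 0 := by
    intro ζ hζ h0
    rw [Metric.mem_closedBall, dist_eq_norm, hrcoe, h0] at hζ
    rw [zero_sub, norm_neg] at hζ
    linarith
  have hub : ∀ ζ ∈ Metric.closedBall z (r:ℝ), ‖ζ‖ ≤ 3/2 * ‖z‖ := by
    intro ζ hζ
    rw [Metric.mem_closedBall, dist_eq_norm, hrcoe] at hζ
    have : ζ = z + (ζ - z) := by ring
    calc ‖ζ‖ = ‖z + (ζ - z)‖ := by rw [← this]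
      _ ≤ ‖z‖ + ‖ζ - z‖ := norm_add_le _ _
      _ ≤ ‖z‖ + ‖z‖/2 := by linarith
      _ = 3/2 * ‖z‖ := by ring
  have hubδ : ∀ ζ ∈ Metric.closedBall z (r:ℝ), ‖ζ‖ ≤ (1/2 : ℝ) ^ (α⁻¹) := by
    intro ζ hζ
    have h1 := hub ζ hζ
    have h2 : δ ≤ (2/3) * (1/2 : ℝ) ^ (α⁻¹) := min_le_left _ _
    nlinarith
  have hcpow_le : ∀ ζ ∈ Metric.closedBall z (r:ℝ), ‖ζ ^ (α:ℂ)‖ ≤ 1/2 := by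
    intro ζ hζ
    rw [habs]
    calc ‖ζ‖ ^ α ≤ ((1/2 : ℝ) ^ (α⁻¹)) ^ α :=
        Real.rpow_le_rpow (norm_nonneg _) (hubδ ζ hζ) hα0.le
      _ = 1/2 := Real.rpow_inv_rpow (by norm_num) hα0.ne'
  have hcpow_ne : ∀ ζ ∈ Metric.closedBall z (r:ℝ), ζ ^ (α:ℂ) ≠ 0 := by
    intro ζ hζ h0
    rw [Complex.cpow_eq_zero_iff] at h0
    exact hne ζ hζ h0.1
  -- differentiability on the closed ball
  have hdiff : DifferentiableOn ℂ F (Metric.closedBall z (r:ℝ)) := by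
    intro ζ hζ
    have hs := hmem ζ hζ
    have hreα : |(ζ ^ (α:ℂ)).re| ≤ 1/2 :=
      le_trans (Complex.abs_re_le_norm _) (hcpow_le ζ hζ)
    have hre2 : (1:ℝ)/2 ≤ (1 + ζ ^ (α:ℂ)).re := by
      rw [Complex.add_re, Complex.one_re]
      have := (abs_le.mp hreα).1
      linarith
    have hslit2 : (1 + ζ ^ (α:ℂ)) ∈ Complex.slitPlane :=
      Complex.mem_slitPlane_iff.mpr (Or.inl (by linarith))
    have hx0 : (1 + ζ ^ (α:ℂ)) ≠ 0 := by
      intro h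
      rw [h] at hre2
      simp at hre2
      linarith
    have hlogne : Complex.log (1 + ζ ^ (α:ℂ)) ≠ 0 := by
      intro h0
      have hexp := Complex.exp_log hx0
      rw [h0, Complex.exp_zero] at hexp
      have : ζ ^ (α:ℂ) = 0 := by
        have := hexp.symm
        rwa [add_eq_left] at this
      exact hcpow_ne ζ hζ this
    apply DifferentiableAt.differentiableWithinAt
    apply DifferentiableAt.sub
    · exact DifferentiableAt.div (differentiableAt_const 1)
        (((differentiableAt_fun_id.cpow (differentiableAt_const _) hs).const_add 1).clog hslit2)
        hlogne
    · apply DifferentiableAt.fun_sum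
      intro j _
      exact (differentiableAt_fun_id.cpow (differentiableAt_const _) hs).const_mul _
  -- bound on the closed ball
  have hbound : ∀ ζ ∈ Metric.closedBall z (r:ℝ),
      ‖F ζ‖ ≤ C * ((3/2 * ‖z‖) ^ α) ^ n := by
    intro ζ hζ
    rw [hFeq ζ]
    refine le_trans (hC (ζ ^ (α:ℂ)) (hcpow_ne ζ hζ) (hcpow_le ζ hζ)) ?_
    refine mul_le_mul_of_nonneg_left ?_ hC0
    refine pow_le_pow_left₀ (norm_nonneg _) ?_ n
    rw [habs]
    exact Real.rpow_le_rpow (norm_nonneg _) (hub ζ hζ) hα0.le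
  have hest := cauchy_estimate hrpos hdiff hbound N
  have halg : ((3/2 * ‖z‖) ^ α : ℝ) ^ n = (3/2:ℝ) ^ (α * (n:ℝ)) * ‖z‖ ^ (α * (n:ℝ)) := by
    rw [← Real.rpow_natCast ((3/2 * ‖z‖) ^ α) n, ← Real.rpow_mul (by positivity),
      Real.mul_rpow (by norm_num) (norm_nonneg z)]
  have halg2 : ((r:ℝ))⁻¹ ^ N = 2 ^ N * ‖z‖ ^ (-(N:ℝ)) := by
    rw [hrcoe, Real.rpow_neg (norm_nonneg z), Real.rpow_natCast, inv_div, div_pow,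
      div_eq_mul_inv]
  have hrhs : ‖(‖z‖ ^ (-(N:ℝ) + (n:ℝ) * α) : ℝ)‖ = ‖z‖ ^ (-(N:ℝ) + (n:ℝ) * α) := by
    rw [Real.norm_eq_abs, _root_.abs_of_nonneg (Real.rpow_nonneg (norm_nonneg z) _)]
  calc ‖iteratedDeriv N F z‖
      ≤ (Nat.factorial N : ℝ) * (C * ((3/2 * ‖z‖) ^ α) ^ n) * ((r:ℝ))⁻¹ ^ N := hest
    _ = K * ‖z‖ ^ (-(N:ℝ) + (n:ℝ) * α) := by
        rw [halg, halg2, Real.rpow_add hznorm, hK, show α * (n:ℝ) = (n:ℝ) * α from mul_comm _ _]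
        ring
    _ = K * ‖(‖z‖ ^ (-(N:ℝ) + (n:ℝ) * α) : ℝ)‖ := by rw [hrhs]
end
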